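/- arXiv:2406.10595 — 4 statements merged into one kernel-verified Lean document; each statement's English description precedes it below -/
import Mathlib

section
/- Let I be a monomial ideal of S = k[x_1,...,x_n] all of whose minimal generators have degree d. Then I satisfies property N_2 if and only if for all minimal monomial generators u, v of I, the graph G_I(u,v) is connected. -/
/- # Preliminary definitions

We work in the polynomial ring `S = k[x_1,…,x_n]`, realized as `MvPolynomial (Fin n) kk`.

* Graded pieces of `Tor_i^S(M, k)` are realized via the (graded) Koszul complex
  `M ⊗ Λ•(S^n)`: the degree-`j` strand in homological degree `i` is the complex
  whose `i`-th term is the direct sum over `i`-subsets `T` of the variables of the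
  degree `j - i` graded piece of `M`.  `TorNonzero` expresses nonvanishing of the
  homology of this strand, i.e. `Tor_i^S(M, k)_j ≠ 0`.
* `reg` is the Castelnuovo–Mumford regularity `max { j - i | Tor_i(M,k)_j ≠ 0 }`.
* `SatisfiesN I d p` says the minimal free resolution of `I` is linear for the first
  `p - 1` steps (with generators in degree `d`), i.e. `Tor_i(I,k)_j = 0` unless
  `j = d + i`, for all `i < p`.  `SatisfiesN I d 2` is "linearly presented". -/

open MvPolynomial

/-- The `i`-th term of the Koszul complex on the variables of `k[x_1,…,x_n]`,
with coefficients in the ring itself: a copy of `S` for each `i`-subset of variables. -/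
abbrev KModule (kk : Type) [Field kk] (n : ℕ) (i : ℕ) : Type :=
  {T : Finset (Fin n) // T.card = i} → MvPolynomial (Fin n) kk

/-- The Koszul differential `K_{m+1} → K_m`. -/
noncomputable def Dmap (kk : Type) [Field kk] (n : ℕ) (m : ℕ) :
    KModule kk n (m + 1) →ₗ[kk] KModule kk n m where
  toFun f T := ∑ t ∈ (T.1ᶜ).attach,
    ((-1 : kk) ^ ((T.1.filter (fun s => s < t.1)).card)) •
      (X t.1 * f ⟨insert t.1 T.1, by
        rw [Finset.card_insert_of_notMem (Finset.mem_compl.mp t.2), T.2]⟩)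
  map_add' f g := by
    funext T
    simp [mul_add, smul_add, Finset.sum_add_distrib]
  map_smul' c f := by
    funext T
    dsimp only [RingHom.id_apply, Pi.smul_apply]
    rw [Finset.smul_sum]
    refine Finset.sum_congr rfl fun t _ => ?_
    rw [mul_smul_comm, smul_comm]

/-- The Koszul differential out of homological degree `i` (the zero map for `i = 0`). -/
noncomputable def Dout (kk : Type) [Field kk] (n : ℕ) :
    (i : ℕ) → (KModule kk n i →ₗ[kk] KModule kk n (i - 1))
  | 0 => 0
  | (m + 1) => Dmap kk n m

/-- The degree-`m` graded piece of an ideal `I ⊆ k[x_1,…,x_n]`,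
as a `k`-subspace (zero in negative degrees). -/
noncomputable def gradedPiece {kk : Type} [Field kk] {n : ℕ}
    (I : Ideal (MvPolynomial (Fin n) kk)) (m : ℤ) :
    Submodule kk (MvPolynomial (Fin n) kk) :=
  if m < 0 then ⊥
  else (Submodule.restrictScalars kk I) ⊓ (homogeneousSubmodule (Fin n) kk m.toNat)

/-- The degree-`j` strand of the Koszul complex of `I` in homological degree `i`. -/
noncomputable def koszulStrand {kk : Type} [Field kk] {n : ℕ}
    (I : Ideal (MvPolynomial (Fin n) kk)) (i : ℕ) (j : ℤ) :
    Submodule kk (KModule kk n i) :=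
  Submodule.pi Set.univ (fun _ => gradedPiece I (j - i))

/-- `TorNonzero I i j` states that `Tor_i^S(I, k)_j ≠ 0`, computed as the homology of the
degree-`j` strand of the Koszul complex of `I`. -/
noncomputable def TorNonzero {kk : Type} [Field kk] {n : ℕ}
    (I : Ideal (MvPolynomial (Fin n) kk)) (i : ℕ) (j : ℤ) : Prop :=
  ¬ ((koszulStrand I i j ⊓ LinearMap.ker (Dout kk n i)) ≤
      Submodule.map (Dmap kk n i) (koszulStrand I (i + 1) j))

/-- The Castelnuovo–Mumford regularity of an ideal `I ⊆ k[x_1,…,x_n]`: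
`reg I = max { j - i : Tor_i^S(I,k)_j ≠ 0 }`. -/
noncomputable def reg {kk : Type} [Field kk] {n : ℕ}
    (I : Ideal (MvPolynomial (Fin n) kk)) : ℤ :=
  sSup { r : ℤ | ∃ (i : ℕ) (j : ℤ), TorNonzero I i j ∧ r = j - i }

/-- Property `N_p` for the ideal `I` (with generators in degree `d`): the minimal graded free
resolution of `I` is linear for `p - 1` steps, i.e. `Tor_i^S(I,k)_j = 0` for `i < p`
unless `j = d + i`. -/
noncomputable def SatisfiesN {kk : Type} [Field kk] {n : ℕ}
    (I : Ideal (MvPolynomial (Fin n) kk)) (d : ℕ) (p : ℕ) : Prop :=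
  ∀ i : ℕ, i < p → ∀ j : ℤ, TorNonzero I i j → j = (d : ℤ) + i

/-- The squarefree monomial `∏_{i ∈ T} x_i`. -/
noncomputable def sqMonomial (kk : Type) [Field kk] {n : ℕ} (T : Finset (Fin n)) :
    MvPolynomial (Fin n) kk :=
  ∏ i ∈ T, X i

/-- `I` is a squarefree monomial ideal generated (up to minimality) by squarefree
monomials of degree `d`. -/
def IsSqfreeMonomialIdealGenInDeg {kk : Type} [Field kk] {n : ℕ}
    (I : Ideal (MvPolynomial (Fin n) kk)) (d : ℕ) : Prop :=
  ∃ G : Set (Finset (Fin n)), (∀ T ∈ G, T.card = d) ∧ I = Ideal.span (sqMonomial kk '' G)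

/-- `I` is a squarefree monomial ideal. -/
def IsSqfreeMonomialIdeal {kk : Type} [Field kk] {n : ℕ}
    (I : Ideal (MvPolynomial (Fin n) kk)) : Prop :=
  ∃ G : Set (Finset (Fin n)), I = Ideal.span (sqMonomial kk '' G)

/-- `I` is a monomial ideal. -/
def IsMonomialIdeal {kk : Type} [Field kk] {n : ℕ}
    (I : Ideal (MvPolynomial (Fin n) kk)) : Prop :=
  ∃ A : Set (Fin n →₀ ℕ), I = Ideal.span ((fun a => monomial a (1 : kk)) '' A)

/-- The monomial with exponent vector `a` is a minimal monomial generator of the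
monomial ideal `I`: it lies in `I` and no proper monomial divisor of it lies in `I`. -/
def IsMinGen {kk : Type} [Field kk] {n : ℕ}
    (I : Ideal (MvPolynomial (Fin n) kk)) (a : Fin n →₀ ℕ) : Prop :=
  monomial a (1 : kk) ∈ I ∧ ∀ b : Fin n →₀ ℕ, b ≤ a → monomial b (1 : kk) ∈ I → b = a

/-- The (total) degree of the monomial with exponent vector `a`. -/
def degExp {n : ℕ} (a : Fin n →₀ ℕ) : ℕ := a.sum fun _ e => e

/-- The graph `G_I` on the minimal monomial generators of `I` (encoded by their exponent
vectors), where two distinct generators `u, v` are adjacent iff `deg lcm(u,v) = d + 1`. -/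
def genGraph {kk : Type} [Field kk] {n : ℕ}
    (I : Ideal (MvPolynomial (Fin n) kk)) (d : ℕ) : SimpleGraph (Fin n →₀ ℕ) where
  Adj u v := IsMinGen I u ∧ IsMinGen I v ∧ u ≠ v ∧ degExp (u ⊔ v) = d + 1
  symm := by
    constructor
    intro u v h
    refine ⟨h.2.1, h.1, h.2.2.1.symm, ?_⟩
    rw [sup_comm]
    exact h.2.2.2
  loopless := by
    constructor
    intro u h
    exact h.2.2.1 rfl

/-- `G_I(u,v)` is connected: the subgraph of `G_I` induced on the minimal generators
dividing `lcm(u,v)` is connected. -/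
def GIConnected {kk : Type} [Field kk] {n : ℕ}
    (I : Ideal (MvPolynomial (Fin n) kk)) (d : ℕ) (u v : Fin n →₀ ℕ) : Prop :=
  ((genGraph I d).induce {w : Fin n →₀ ℕ | IsMinGen I w ∧ w ≤ u ⊔ v}).Connected

/-- The restriction `I(U)` of a monomial ideal to a subset `U` of the variables:
the ideal generated by the minimal monomial generators supported in `U`. -/
noncomputable def restrictIdeal {kk : Type} [Field kk] {n : ℕ}
    (I : Ideal (MvPolynomial (Fin n) kk)) (U : Set (Fin n)) :
    Ideal (MvPolynomial (Fin n) kk) :=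
  Ideal.span { p | ∃ a : Fin n →₀ ℕ, IsMinGen I a ∧ (↑a.support : Set (Fin n)) ⊆ U ∧
    p = monomial a (1 : kk) }

/-- `I_f`: the ideal generated by the minimal monomial generators of `I` divisible by the
monomial with exponent vector `c`. -/
noncomputable def subIdeal {kk : Type} [Field kk] {n : ℕ}
    (I : Ideal (MvPolynomial (Fin n) kk)) (c : Fin n →₀ ℕ) :
    Ideal (MvPolynomial (Fin n) kk) :=
  Ideal.span { p | ∃ a : Fin n →₀ ℕ, IsMinGen I a ∧ c ≤ a ∧ p = monomial a (1 : kk) }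

/-- `Ī_f`: the ideal generated by `g / f` as `g` ranges over the minimal monomial
generators of `I` divisible by the monomial `f` with exponent vector `c`. -/
noncomputable def barIdeal {kk : Type} [Field kk] {n : ℕ}
    (I : Ideal (MvPolynomial (Fin n) kk)) (c : Fin n →₀ ℕ) :
    Ideal (MvPolynomial (Fin n) kk) :=
  Ideal.span { p | ∃ a : Fin n →₀ ℕ, IsMinGen I a ∧ c ≤ a ∧ p = monomial (a - c) (1 : kk) }

/-- `J_{[d]}`: the squarefree monomial ideal generated by all squarefree monomials of
degree `d` lying in `J`. -/
noncomputable def sqfreePart {kk : Type} [Field kk] {n : ℕ}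
    (J : Ideal (MvPolynomial (Fin n) kk)) (d : ℕ) :
    Ideal (MvPolynomial (Fin n) kk) :=
  Ideal.span { p | ∃ T : Finset (Fin n), T.card = d ∧ sqMonomial kk T ∈ J ∧
    p = sqMonomial kk T }

/-- The Alexander dual `I^∨` of a squarefree monomial ideal `I`: the Stanley–Reisner ideal
of the Alexander dual complex, generated by the squarefree monomials `x_T` such that
`x_{Tᶜ} ∉ I`. -/
noncomputable def alexDual {kk : Type} [Field kk] {n : ℕ}
    (I : Ideal (MvPolynomial (Fin n) kk)) : Ideal (MvPolynomial (Fin n) kk) :=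
  Ideal.span { p | ∃ T : Finset (Fin n), sqMonomial kk (Tᶜ) ∉ I ∧ p = sqMonomial kk T }

/- ## Part 2: projective dimension of `S/I`, cohomological dimension, depth, `S_2`, height -/

/-- The `i`-th term of the Koszul complex with coefficients in `S ⧸ I`. -/
abbrev QModule (kk : Type) [Field kk] (n : ℕ) (I : Ideal (MvPolynomial (Fin n) kk))
    (i : ℕ) : Type :=
  {T : Finset (Fin n) // T.card = i} → (MvPolynomial (Fin n) kk ⧸ I)

/-- The Koszul differential on `S ⧸ I` coefficients. -/
noncomputable def DmapQ (kk : Type) [Field kk] (n : ℕ)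
    (I : Ideal (MvPolynomial (Fin n) kk)) (m : ℕ) :
    QModule kk n I (m + 1) →ₗ[kk] QModule kk n I m where
  toFun f T := ∑ t ∈ (T.1ᶜ).attach,
    ((-1 : kk) ^ ((T.1.filter (fun s => s < t.1)).card)) •
      (Ideal.Quotient.mk I (X t.1) * f ⟨insert t.1 T.1, by
        rw [Finset.card_insert_of_notMem (Finset.mem_compl.mp t.2), T.2]⟩)
  map_add' f g := by
    funext T
    simp [mul_add, smul_add, Finset.sum_add_distrib]
  map_smul' c f := by
    funext T
    dsimp only [RingHom.id_apply, Pi.smul_apply]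
    rw [Finset.smul_sum]
    refine Finset.sum_congr rfl fun t _ => ?_
    rw [mul_smul_comm, smul_comm]

/-- The Koszul differential on `S ⧸ I` out of homological degree `i`. -/
noncomputable def DoutQ (kk : Type) [Field kk] (n : ℕ)
    (I : Ideal (MvPolynomial (Fin n) kk)) :
    (i : ℕ) → (QModule kk n I i →ₗ[kk] QModule kk n I (i - 1))
  | 0 => 0
  | (m + 1) => DmapQ kk n I m

/-- The degree-`m` graded piece of `S ⧸ I` (zero in negative degrees). -/
noncomputable def gradedPieceQ {kk : Type} [Field kk] {n : ℕ}
    (I : Ideal (MvPolynomial (Fin n) kk)) (m : ℤ) :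
    Submodule kk (MvPolynomial (Fin n) kk ⧸ I) :=
  if m < 0 then ⊥
  else (homogeneousSubmodule (Fin n) kk m.toNat).map (Ideal.Quotient.mkₐ kk I).toLinearMap

/-- The degree-`j` strand of the Koszul complex of `S ⧸ I` in homological degree `i`. -/
noncomputable def koszulStrandQ {kk : Type} [Field kk] {n : ℕ}
    (I : Ideal (MvPolynomial (Fin n) kk)) (i : ℕ) (j : ℤ) :
    Submodule kk (QModule kk n I i) :=
  Submodule.pi Set.univ (fun _ => gradedPieceQ I (j - i))

/-- `TorNonzeroQ I i j` states that `Tor_i^S(S/I, k)_j ≠ 0`. -/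
noncomputable def TorNonzeroQ {kk : Type} [Field kk] {n : ℕ}
    (I : Ideal (MvPolynomial (Fin n) kk)) (i : ℕ) (j : ℤ) : Prop :=
  ¬ ((koszulStrandQ I i j ⊓ LinearMap.ker (DoutQ kk n I i)) ≤
      Submodule.map (DmapQ kk n I i) (koszulStrandQ I (i + 1) j))

/-- The projective dimension of `S ⧸ I` over `S = k[x_1,…,x_n]`, via the characterization
`pd(S/I) = max { i : Tor_i^S(S/I, k) ≠ 0 }` by minimal graded free resolutions. -/
noncomputable def projdimQuot {kk : Type} [Field kk] {n : ℕ}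
    (I : Ideal (MvPolynomial (Fin n) kk)) : ℕ :=
  sSup { i : ℕ | ∃ j : ℤ, TorNonzeroQ I i j }

/-- The cohomological dimension `cd(R, J)`: the supremum of the `i` such that the local
cohomology `H_J^i(M)` is nonzero for some `R`-module `M`. -/
noncomputable def cohomologicalDimension (R : Type) [CommRing R] (J : Ideal R) : ℕ :=
  sSup { i : ℕ | ∃ M : ModuleCat R, Nontrivial ((localCohomology J i).obj M) }

/-- `depthGE R J t` : the ideal `J` contains a regular sequence on `R` of length `t`,
i.e. `depth(J, R) ≥ t`. -/
def depthGE (R : Type) [CommRing R] (J : Ideal R) (t : ℕ) : Prop :=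
  ∃ rs : List R, rs.length = t ∧ (∀ r ∈ rs, r ∈ J) ∧ RingTheory.Sequence.IsRegular R rs

/-- Serre's condition `(S_2)` for a commutative ring `R`:
`depth R_p ≥ min(2, dim R_p)` for every prime `p`. -/
def SerreS2 (R : Type) [CommRing R] : Prop :=
  ∀ p : Ideal R, ∀ _ : p.IsPrime,
    ∀ t : ℕ, (t : WithBot ℕ∞) ≤ min 2 (ringKrullDim (Localization.AtPrime p)) →
      depthGE (Localization.AtPrime p)
        (IsLocalRing.maximalIdeal (Localization.AtPrime p)) t

/-- The height of an ideal: the infimum of the heights of the primes containing it. -/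
noncomputable def idealHeight {R : Type} [CommRing R] (I : Ideal R) : ℕ∞ :=
  ⨅ p : { p : PrimeSpectrum R // I ≤ p.asIdeal }, Order.height p.1

/-- The numerical function `f(n,d)` of the paper:
`f(n,d) = 0` if `n < d`, `f(d,d) = d`, and `f(n,d) = ⌊(d-1)n/(d+1)⌋ + 1` for `n > d`. -/
def fval (n d : ℕ) : ℕ :=
  if n < d then 0 else if n = d then d else (d - 1) * n / (d + 1) + 1

/-- The numerical function `g(n,d) = n - ⌊n/(d+1)⌋ - ⌊(n-1)/(d+1)⌋` of the paper. -/
def gval (n d : ℕ) : ℕ := n - n / (d + 1) - (n - 1) / (d + 1)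

/-- `I` is a homogeneous ideal: it is stable under taking homogeneous components. -/
def IsHomog {kk : Type} [Field kk] {n : ℕ} (I : Ideal (MvPolynomial (Fin n) kk)) : Prop :=
  ∀ p ∈ I, ∀ i : ℕ, homogeneousComponent i p ∈ I


namespace N2

open MvPolynomial Finsupp

variable {kk : Type} [Field kk] {n : ℕ}

/-- single exponent -/
noncomputable abbrev ee (t : Fin n) : Fin n →₀ ℕ := Finsupp.single t 1

lemma degExp_add (a b : Fin n →₀ ℕ) : degExp (a + b) = degExp a + degExp b := by
  classical
  exact Finsupp.sum_add_index' (fun _ => rfl) (fun _ _ _ => rfl)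

lemma degExp_single (t : Fin n) (k : ℕ) : degExp (Finsupp.single t k) = k := by
  classical
  simp [degExp, Finsupp.sum_single_index]

lemma degExp_eq_degree (a : Fin n →₀ ℕ) : degExp a = a.degree := rfl

lemma degExp_mono {a b : Fin n →₀ ℕ} (h : a ≤ b) : degExp a ≤ degExp b := by
  have := tsub_add_cancel_of_le h
  calc degExp a ≤ degExp (b - a) + degExp a := Nat.le_add_left _ _
  _ = degExp (b - a + a) := (degExp_add _ _).symm
  _ = degExp b := by rw [this]

lemma eq_of_le_of_degExp_le {a b : Fin n →₀ ℕ} (h : a ≤ b) (hd : degExp b ≤ degExp a) :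
    a = b := by
  have h1 := tsub_add_cancel_of_le h
  have h2 : degExp (b - a) + degExp a = degExp b := by
    rw [← degExp_add, h1]
  have h3 : degExp (b - a) = 0 := by omega
  have h4 : b - a = 0 := by
    rw [degExp_eq_degree] at h3
    exact (Finsupp.degree_eq_zero_iff _).mp h3
  rw [← h1, h4, zero_add]

lemma exists_slot {w b : Fin n →₀ ℕ} (h : w ≤ b) (hd : degExp w < degExp b) :
    ∃ r, w + ee r ≤ b := by
  classical
  have hne : w ≠ b := by
    intro he; rw [he] at hd; omega
  have : ∃ r, w r < b r := by
    by_contra hc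
    push_neg at hc
    apply hne
    ext r
    exact le_antisymm (Finsupp.le_def.mp h r) (hc r)
  obtain ⟨r, hr⟩ := this
  refine ⟨r, Finsupp.le_def.mpr fun i => ?_⟩
  simp only [Finsupp.add_apply, Finsupp.single_apply]
  by_cases hi : r = i
  · subst hi; simpa using hr
  · simp [hi, Finsupp.le_def.mp h i]

lemma add_le_of_le_tsub {u v b : Fin n →₀ ℕ} (h1 : u ≤ b - v) (h2 : v ≤ b) :
    u + v ≤ b := by
  calc u + v ≤ (b - v) + v := add_le_add_left h1 v
  _ = b := tsub_add_cancel_of_le h2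

lemma single_le_of_add_le {u : Fin n →₀ ℕ} {s : Fin n} {b : Fin n →₀ ℕ}
    (h : u + ee s ≤ b) : ee s ≤ b :=
  le_trans (by simp) h

end N2
namespace N2

open MvPolynomial Finsupp

variable {kk : Type} [Field kk] {n : ℕ} {I : Ideal (MvPolynomial (Fin n) kk)} {d : ℕ}

/-- membership for monomial ideals via support domination by generators -/
lemma mem_iff_support (hmon : IsMonomialIdeal I) {p : MvPolynomial (Fin n) kk} :
    p ∈ I ↔ ∀ c ∈ p.support, ∃ a, monomial a (1 : kk) ∈ I ∧ a ≤ c := by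
  obtain ⟨A, hA⟩ := hmon
  constructor
  · intro hp c hc
    rw [hA] at hp
    obtain ⟨a, haA, hale⟩ := MvPolynomial.mem_ideal_span_monomial_image.mp hp c hc
    exact ⟨a, by rw [hA]; exact Ideal.subset_span ⟨a, haA, rfl⟩, hale⟩
  · intro h
    rw [hA]
    exact MvPolynomial.mem_ideal_span_monomial_image.mpr fun c hc => by
      obtain ⟨a, ha, hle⟩ := h c hc
      rw [hA] at ha
      have := MvPolynomial.mem_ideal_span_monomial_image.mp ha a ?_
      · obtain ⟨a', ha', hle'⟩ := this
        exact ⟨a', ha', le_trans hle' hle⟩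
      · simp [MvPolynomial.support_monomial]

lemma mon_mem_of_le {a c : Fin n →₀ ℕ} (ha : monomial a (1 : kk) ∈ I) (h : a ≤ c) :
    monomial c (1 : kk) ∈ I := by
  have : monomial c (1 : kk) = monomial (c - a) (1 : kk) * monomial a (1 : kk) := by
    rw [MvPolynomial.monomial_mul, one_mul, tsub_add_cancel_of_le h]
  rw [this]
  exact Ideal.mul_mem_left _ _ ha

lemma mon_mem_of_mem_support (hmon : IsMonomialIdeal I) {p : MvPolynomial (Fin n) kk}
    (hp : p ∈ I) {c : Fin n →₀ ℕ} (hc : c ∈ p.support) : monomial c (1 : kk) ∈ I := by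
  obtain ⟨a, ha, hle⟩ := (mem_iff_support hmon).mp hp c hc
  exact mon_mem_of_le ha hle

lemma exists_minGen_le {c : Fin n →₀ ℕ} (hc : monomial c (1 : kk) ∈ I) :
    ∃ a, IsMinGen I a ∧ a ≤ c := by
  suffices H : ∀ N (c : Fin n →₀ ℕ), degExp c ≤ N → monomial c (1 : kk) ∈ I →
      ∃ a, IsMinGen I a ∧ a ≤ c from H (degExp c) c le_rfl hc
  intro N
  induction N using Nat.strong_induction_on with
  | _ N ih =>
    intro c hN hc
    by_cases hmin : ∀ b : Fin n →₀ ℕ, b ≤ c → monomial b (1 : kk) ∈ I → b = c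
    · exact ⟨c, ⟨hc, hmin⟩, le_rfl⟩
    · push_neg at hmin
      obtain ⟨b, hbc, hbI, hbne⟩ := hmin
      have hlt : degExp b < degExp c := by
        rcases lt_or_ge (degExp b) (degExp c) with h | h
        · exact h
        · exact absurd (eq_of_le_of_degExp_le hbc h) hbne
      obtain ⟨a, ha, hab⟩ := ih (degExp b) (by omega) b le_rfl hbI
      exact ⟨a, ha, le_trans hab hbc⟩

lemma exists_minGen_le' (hmon : IsMonomialIdeal I) {p : MvPolynomial (Fin n) kk}
    (hp : p ∈ I) {c : Fin n →₀ ℕ} (hc : c ∈ p.support) :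
    ∃ a, IsMinGen I a ∧ a ≤ c :=
  exists_minGen_le (mon_mem_of_mem_support hmon hp hc)

lemma deg_ge_of_mon_mem (hdeg : ∀ a : Fin n →₀ ℕ, IsMinGen I a → degExp a = d)
    {c : Fin n →₀ ℕ} (hc : monomial c (1 : kk) ∈ I) : d ≤ degExp c := by
  obtain ⟨a, ha, hle⟩ := exists_minGen_le hc
  rw [← hdeg a ha]
  exact degExp_mono hle

end N2
namespace N2

open MvPolynomial Finsupp

variable {kk : Type} [Field kk] {n : ℕ} {I : Ideal (MvPolynomial (Fin n) kk)} {d : ℕ}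

/-- Edge of the graph `Γ_b`. -/
def Edg (I : Ideal (MvPolynomial (Fin n) kk)) (b : Fin n →₀ ℕ) (s t : Fin n) : Prop :=
  s ≠ t ∧ ee s + ee t ≤ b ∧ monomial (b - (ee s + ee t)) (1 : kk) ∈ I

/-- Reachability in `Γ_b`. -/
def GammaReach (I : Ideal (MvPolynomial (Fin n) kk)) (b : Fin n →₀ ℕ) :
    Fin n → Fin n → Prop :=
  Relation.ReflTransGen (Edg I b)

lemma Edg.symm {b : Fin n →₀ ℕ} {s t : Fin n} (h : Edg I b s t) : Edg I b t s := by
  refine ⟨h.1.symm, ?_, ?_⟩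
  · rw [add_comm]; exact h.2.1
  · rw [add_comm]; exact h.2.2

lemma clique {w b : Fin n →₀ ℕ} {s t : Fin n} (hw : monomial w (1 : kk) ∈ I)
    (hs : w + ee s ≤ b) (ht : w + ee t ≤ b) : GammaReach I b s t := by
  by_cases hst : s = t
  · subst hst; exact Relation.ReflTransGen.refl
  · have key : w + (ee s + ee t) ≤ b := by
      rw [Finsupp.le_def]
      intro i
      have h1 := Finsupp.le_def.mp hs i
      have h2 := Finsupp.le_def.mp ht i
      simp only [Finsupp.add_apply, Finsupp.single_apply] at h1 h2 ⊢
      by_cases his : s = i <;> by_cases hit : t = i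
      · exact absurd (his.trans hit.symm) hst
      all_goals simp only [his, hit, if_true, if_false] at h1 h2 ⊢ <;> omega
    exact Relation.ReflTransGen.single
      ⟨hst, le_trans le_add_self key, mon_mem_of_le hw (le_tsub_of_add_le_right key)⟩

/-- connectivity of all the graphs `Γ_b` in relevant degrees. -/
def HGam (I : Ideal (MvPolynomial (Fin n) kk)) (d : ℕ) : Prop :=
  ∀ (b : Fin n →₀ ℕ) (s t : Fin n), d + 2 ≤ degExp b →
    ee s ≤ b → monomial (b - ee s) (1 : kk) ∈ I →
    ee t ≤ b → monomial (b - ee t) (1 : kk) ∈ I → GammaReach I b s t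

lemma HGam_of_conn (hdeg : ∀ a : Fin n →₀ ℕ, IsMinGen I a → degExp a = d)
    (hconn : ∀ u v : Fin n →₀ ℕ, IsMinGen I u → IsMinGen I v → GIConnected I d u v) :
    HGam I d := by
  intro b s t hb hs hsI ht htI
  obtain ⟨u, hu, hus⟩ := exists_minGen_le hsI
  obtain ⟨v, hv, hvt⟩ := exists_minGen_le htI
  have husb : u + ee s ≤ b := add_le_of_le_tsub hus hs
  have hvtb : v + ee t ≤ b := add_le_of_le_tsub hvt ht
  have hub : u ≤ b := le_trans (self_le_add_right u (ee s)) husb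
  have hvb : v ≤ b := le_trans (self_le_add_right v (ee t)) hvtb
  have hsup : u ⊔ v ≤ b := sup_le hub hvb
  have hcon := hconn u v hu hv
  set Sset : Set (Fin n →₀ ℕ) := {w | IsMinGen I w ∧ w ≤ u ⊔ v} with hSset
  have hx : u ∈ Sset := ⟨hu, le_sup_left⟩
  have hy : v ∈ Sset := ⟨hv, le_sup_right⟩
  have key : ∀ (x y : Sset) (_ : ((genGraph I d).induce Sset).Walk x y) (r r' : Fin n),
      x.1 + ee r ≤ b → y.1 + ee r' ≤ b → GammaReach I b r r' := by
    intro x y W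
    induction W with
    | @nil a =>
      intro r r' h1 h2
      exact clique a.2.1.1 h1 h2
    | @cons a a₁ a₂ h W ih =>
      intro r r' h1 h2
      have hadj : IsMinGen I a.1 ∧ IsMinGen I a₁.1 ∧ a.1 ≠ a₁.1 ∧
          degExp (a.1 ⊔ a₁.1) = d + 1 := h
      have hsupb : a.1 ⊔ a₁.1 ≤ b := le_trans (sup_le_sup a.2.2 a₁.2.2) (by rw [sup_idem]; exact hsup)
      have hdlt : degExp (a.1 ⊔ a₁.1) < degExp b := by rw [hadj.2.2.2]; omega
      obtain ⟨r₁, hr₁⟩ := exists_slot hsupb hdlt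
      have ha1 : a.1 + ee r₁ ≤ b :=
        le_trans (add_le_add_left le_sup_left (ee r₁)) hr₁
      have ha2 : a₁.1 + ee r₁ ≤ b :=
        le_trans (add_le_add_left le_sup_right (ee r₁)) hr₁
      exact (clique a.2.1.1 h1 ha1).trans (ih r₁ r' ha2 h2)
  exact (hcon.preconnected ⟨u, hx⟩ ⟨v, hy⟩).elim fun W => key ⟨u, hx⟩ ⟨v, hy⟩ W s t husb hvtb

/-- Adjacency in `G_I` between generators dividing `b`. -/
def AdjB (I : Ideal (MvPolynomial (Fin n) kk)) (d : ℕ) (b : Fin n →₀ ℕ)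
    (x y : Fin n →₀ ℕ) : Prop :=
  (genGraph I d).Adj x y ∧ x ≤ b ∧ y ≤ b

lemma adjB_mono {b b' x y : Fin n →₀ ℕ} (h : b ≤ b') (ha : AdjB I d b x y) :
    AdjB I d b' x y :=
  ⟨ha.1, le_trans ha.2.1 h, le_trans ha.2.2 h⟩

lemma base_conn (hdeg : ∀ a : Fin n →₀ ℕ, IsMinGen I a → degExp a = d)
    {b : Fin n →₀ ℕ} (hb : degExp b ≤ d + 1) {w w' : Fin n →₀ ℕ} (hw : IsMinGen I w)
    (hw' : IsMinGen I w') (h1 : w ≤ b) (h2 : w' ≤ b) :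
    Relation.ReflTransGen (AdjB I d b) w w' := by
  by_cases he : w = w'
  · subst he; exact Relation.ReflTransGen.refl
  · have hsup : w ⊔ w' ≤ b := sup_le h1 h2
    have hd1 : degExp (w ⊔ w') ≤ d + 1 := le_trans (degExp_mono hsup) hb
    have hde : degExp (w ⊔ w') = d + 1 := by
      rcases Nat.lt_or_ge (degExp (w ⊔ w')) (d + 1) with h | h
      · exfalso
        have e1 : w = w ⊔ w' := eq_of_le_of_degExp_le le_sup_left (by rw [hdeg w hw]; omega)
        have e2 : w' = w ⊔ w' := eq_of_le_of_degExp_le le_sup_right (by rw [hdeg w' hw']; omega)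
        exact he (e1.trans e2.symm)
      · omega
    exact Relation.ReflTransGen.single ⟨⟨hw, hw', he, hde⟩, h1, h2⟩

lemma degExp_tsub_single {b : Fin n →₀ ℕ} {t : Fin n} (h : ee t ≤ b) :
    degExp (b - ee t) + 1 = degExp b := by
  have h1 : (b - ee t) + ee t = b := tsub_add_cancel_of_le h
  calc degExp (b - ee t) + 1 = degExp (b - ee t) + degExp (ee t) := by rw [degExp_single]
  _ = degExp ((b - ee t) + ee t) := (degExp_add _ _).symm
  _ = degExp b := by rw [h1]

lemma key_conn (hdeg : ∀ a : Fin n →₀ ℕ, IsMinGen I a → degExp a = d) (HG : HGam I d) :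
    ∀ (N : ℕ) (b : Fin n →₀ ℕ), degExp b ≤ N →
    ∀ w w', IsMinGen I w → IsMinGen I w' → w ≤ b → w' ≤ b →
    Relation.ReflTransGen (AdjB I d b) w w' := by
  intro N
  induction N with
  | zero =>
    intro b hb w w' hw hw' h1 h2
    exact base_conn hdeg (by omega) hw hw' h1 h2
  | succ N ih =>
    intro b hb w w' hw hw' h1 h2
    by_cases hsmall : degExp b ≤ d + 1
    · exact base_conn hdeg hsmall hw hw' h1 h2
    · have hbig : d + 2 ≤ degExp b := by omega
      obtain ⟨r, hr⟩ := exists_slot h1 (by rw [hdeg w hw]; omega)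
      obtain ⟨r', hr'⟩ := exists_slot h2 (by rw [hdeg w' hw']; omega)
      have hreach : GammaReach I b r r' :=
        HG b r r' hbig (single_le_of_add_le hr)
          (mon_mem_of_le hw.1 (le_tsub_of_add_le_right hr))
          (single_le_of_add_le hr')
          (mon_mem_of_le hw'.1 (le_tsub_of_add_le_right hr'))
      have inner : ∀ s t, GammaReach I b s t → ∀ z z', IsMinGen I z → IsMinGen I z' →
          z + ee s ≤ b → z' + ee t ≤ b → Relation.ReflTransGen (AdjB I d b) z z' := by
        intro s t hst
        induction hst using Relation.ReflTransGen.head_induction_on with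
        | refl =>
          intro z z' hz hz' hzs hz't
          have hle : ee t ≤ b := single_le_of_add_le hz't
          have hb' : degExp (b - ee t) ≤ N := by
            have := degExp_tsub_single hle
            omega
          exact Relation.ReflTransGen.mono (p := AdjB I d b) (fun a c h => adjB_mono tsub_le_self h) z z'
            (ih (b - ee t) hb' z z' hz hz' (le_tsub_of_add_le_right hzs)
              (le_tsub_of_add_le_right hz't))
        | @head s₀ s₁ hE hrest ihh =>
          intro z z' hz hz' hzs hz't
          obtain ⟨zmid, hzm, hzmle⟩ := exists_minGen_le hE.2.2
          have hfull : zmid + (ee s₀ + ee s₁) ≤ b := add_le_of_le_tsub hzmle hE.2.1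
          have hzs' : zmid + ee s₀ ≤ b :=
            le_trans (add_le_add_right le_self_add zmid) hfull
          have hzs₁ : zmid + ee s₁ ≤ b :=
            le_trans (add_le_add_right le_add_self zmid) hfull
          have hles : ee s₀ ≤ b := single_le_of_add_le hzs
          have hb' : degExp (b - ee s₀) ≤ N := by
            have := degExp_tsub_single hles
            omega
          have part1 : Relation.ReflTransGen (AdjB I d b) z zmid :=
            Relation.ReflTransGen.mono (p := AdjB I d b) (fun a c h => adjB_mono tsub_le_self h) z zmid
              (ih (b - ee s₀) hb' z zmid hz hzm (le_tsub_of_add_le_right hzs)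
                (le_tsub_of_add_le_right hzs'))
          exact part1.trans (ihh zmid z' hzm hz' hzs₁ hz't)
      exact inner r r' hreach w w' hw hw' hr hr'

lemma conn_of_HGam (hdeg : ∀ a : Fin n →₀ ℕ, IsMinGen I a → degExp a = d)
    (HG : HGam I d) (u v : Fin n →₀ ℕ) (hu : IsMinGen I u) (hv : IsMinGen I v) :
    GIConnected I d u v := by
  unfold GIConnected
  rw [SimpleGraph.connected_iff]
  set Sset : Set (Fin n →₀ ℕ) := {w | IsMinGen I w ∧ w ≤ u ⊔ v} with hSset
  refine ⟨?_, ⟨⟨u, hu, le_sup_left⟩⟩⟩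
  intro x y
  have hrtg := key_conn hdeg HG (degExp (u ⊔ v)) (u ⊔ v) le_rfl x.1 y.1 x.2.1 y.2.1 x.2.2 y.2.2
  have lift : ∀ z z', Relation.ReflTransGen (AdjB I d (u ⊔ v)) z z' →
      ∀ (hz : z ∈ Sset) (hz' : z' ∈ Sset),
      ((genGraph I d).induce Sset).Reachable ⟨z, hz⟩ ⟨z', hz'⟩ := by
    intro z z' h
    induction h using Relation.ReflTransGen.head_induction_on with
    | refl => intro hz hz'; exact SimpleGraph.Reachable.refl _
    | @head z₀ z₁ hE hrest ihh =>
      intro hz hz'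
      have hz₁ : z₁ ∈ Sset := ⟨hE.1.2.1, hE.2.2⟩
      have hadj : ((genGraph I d).induce Sset).Adj ⟨z₀, hz⟩ ⟨z₁, hz₁⟩ := hE.1
      exact (hadj.reachable).trans (ihh hz₁ hz')
  exact lift x.1 y.1 hrtg x.2 y.2

end N2
namespace N2

open MvPolynomial Finsupp

variable {kk : Type} [Field kk] {n : ℕ} {I : Ideal (MvPolynomial (Fin n) kk)} {d : ℕ}

lemma gp_bot {j : ℤ} (hj : j < 0) : gradedPiece I j = (⊥ : Submodule kk _) := by
  unfold gradedPiece
  rw [if_pos hj]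

lemma isHomog_iff_support {x : MvPolynomial (Fin n) kk} {m : ℕ} :
    x.IsHomogeneous m ↔ ∀ c ∈ x.support, degExp c = m := by
  constructor
  · intro h c hc
    by_contra hne
    have : degExp c = Finsupp.degree c := rfl
    exact (MvPolynomial.mem_support_iff.mp hc) (h.coeff_eq_zero (by rw [← this]; exact hne))
  · intro h
    rw [← support_sum_monomial_coeff x]
    apply MvPolynomial.IsHomogeneous.sum
    intro c hc
    exact isHomogeneous_monomial _ (h c hc)

lemma mem_gp {j : ℤ} (hj : 0 ≤ j) {x : MvPolynomial (Fin n) kk} :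
    x ∈ gradedPiece I j ↔ x ∈ I ∧ ∀ c ∈ x.support, degExp c = j.toNat := by
  unfold gradedPiece
  rw [if_neg (by omega)]
  rw [Submodule.mem_inf]
  constructor
  · rintro ⟨h1, h2⟩
    exact ⟨h1, isHomog_iff_support.mp ((mem_homogeneousSubmodule _ _).mp h2)⟩
  · rintro ⟨h1, h2⟩
    exact ⟨h1, (mem_homogeneousSubmodule _ _).mpr (isHomog_iff_support.mpr h2)⟩

/-- The singleton index. -/
def sing (t : Fin n) : {T : Finset (Fin n) // T.card = 1} :=
  ⟨{t}, Finset.card_singleton t⟩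

noncomputable def pick1 (T : {T : Finset (Fin n) // T.card = 1}) : Fin n :=
  (Finset.card_eq_one.mp T.2).choose

lemma pick1_spec (T : {T : Finset (Fin n) // T.card = 1}) : T.1 = {pick1 T} :=
  (Finset.card_eq_one.mp T.2).choose_spec

lemma sing_pick1 (T : {T : Finset (Fin n) // T.card = 1}) : sing (pick1 T) = T :=
  Subtype.ext (pick1_spec T).symm

lemma pick1_sing (t : Fin n) : pick1 (sing t) = t := by
  have h := pick1_spec (sing t)
  exact (Finset.singleton_injective h.symm)

lemma empty0 (T : {T : Finset (Fin n) // T.card = 0}) :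
    T = ⟨∅, Finset.card_empty⟩ :=
  Subtype.ext (Finset.card_eq_zero.mp T.2)

lemma Dmap_apply (m : ℕ) (f : KModule kk n (m + 1)) (T : {T : Finset (Fin n) // T.card = m}) :
    Dmap kk n m f T = ∑ t ∈ (T.1ᶜ).attach,
      ((-1 : kk) ^ ((T.1.filter (fun s => s < t.1)).card)) •
        (X t.1 * f ⟨insert t.1 T.1, by
          rw [Finset.card_insert_of_notMem (Finset.mem_compl.mp t.2), T.2]⟩) := rfl

lemma mem_strand {i : ℕ} {j : ℤ} {x : KModule kk n i} :
    x ∈ koszulStrand I i j ↔ ∀ T, x T ∈ gradedPiece I (j - i) := by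
  unfold koszulStrand
  rw [Submodule.mem_pi]
  exact ⟨fun h T => h T trivial, fun h T _ => h T⟩

lemma mon_smul_mem {c : Fin n →₀ ℕ} (hc : monomial c (1 : kk) ∈ I) (κ : kk) :
    monomial c κ ∈ I := by
  have : monomial c κ = monomial 0 κ * monomial c (1 : kk) := by
    rw [MvPolynomial.monomial_mul, zero_add, mul_one]
  rw [this]
  exact Ideal.mul_mem_left _ _ hc

lemma support_monomial_sub {c c' : Fin n →₀ ℕ} {κ : kk}
    (h : c' ∈ (monomial c κ).support) : c' = c := by
  have := MvPolynomial.mem_support_iff.mp h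
  rw [MvPolynomial.coeff_monomial] at this
  by_cases he : c = c'
  · exact he.symm
  · rw [if_neg he] at this; exact absurd rfl this

lemma tor0 (hmon : IsMonomialIdeal I)
    (hdeg : ∀ a : Fin n →₀ ℕ, IsMinGen I a → degExp a = d) {j : ℤ} (hj : j ≠ (d : ℤ)) :
    koszulStrand I 0 j ⊓ LinearMap.ker (Dout kk n 0) ≤
      Submodule.map (Dmap kk n 0) (koszulStrand I (0 + 1) j) := by
  intro x hx
  have hx1 : ∀ T, x T ∈ gradedPiece I j := by
    intro T
    have := mem_strand.mp hx.1 T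
    simpa using this
  rcases lt_or_ge j 0 with hneg | hpos
  · have hx0 : x = 0 := by
      funext T
      have := hx1 T
      rw [gp_bot hneg] at this
      simpa using this
    rw [hx0]
    exact Submodule.zero_mem _
  · set m := j.toNat with hm
    have hjm : j = (m : ℤ) := (Int.toNat_of_nonneg hpos).symm
    obtain ⟨hpI, hsupp⟩ := (mem_gp hpos).mp (by simpa using hx1 ⟨∅, Finset.card_empty⟩)
    set p := x ⟨∅, Finset.card_empty⟩ with hp
    have hmd : m ≠ d := fun h => hj (by rw [hjm, h])
    rcases Nat.lt_or_ge m d with hlt | hge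
    · -- p = 0
      have hps : p.support = ∅ := by
        rw [Finset.eq_empty_iff_forall_notMem]
        intro c hc
        have h1 := hsupp c hc
        have h2 := deg_ge_of_mon_mem hdeg (mon_mem_of_mem_support hmon hpI hc)
        omega
      have hp0 : p = 0 := MvPolynomial.support_eq_empty.mp hps
      have hx0 : x = 0 := by
        funext T
        rw [empty0 T]
        exact hp0
      rw [hx0]
      exact Submodule.zero_mem _
    · have hgt : d < m := by omega
      have hxsum : x = ∑ c ∈ p.support, (fun _ => monomial c (coeff c p) : KModule kk n 0) := by
        funext T
        rw [Finset.sum_apply]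
        rw [empty0 T]
        exact (support_sum_monomial_coeff p).symm
      rw [hxsum]
      apply Submodule.sum_mem
      intro c hc
      obtain ⟨u, hu, huc⟩ := exists_minGen_le' hmon hpI hc
      have hud : degExp u = d := hdeg u hu
      have hcm : degExp c = m := hsupp c hc
      obtain ⟨r, hr⟩ := exists_slot huc (by omega)
      have herc : ee r ≤ c := single_le_of_add_le hr
      have hIcr : monomial (c - ee r) (1 : kk) ∈ I :=
        mon_mem_of_le hu.1 (le_tsub_of_add_le_right hr)
      set κ := coeff c p with hκ
      refine ⟨(fun T => if T.1 = {r} then monomial (c - ee r) κ else 0), ?_, ?_⟩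
      · rw [SetLike.mem_coe, mem_strand]
        intro T
        have hj1 : (0:ℤ) ≤ j - (0 + 1 : ℕ) := by push_cast; omega
        by_cases hT : T.1 = {r}
        · rw [if_pos hT, mem_gp hj1]
          constructor
          · exact mon_smul_mem hIcr κ
          · intro c' hc'
            rw [support_monomial_sub hc']
            have := degExp_tsub_single herc
            have : degExp (c - ee r) = m - 1 := by omega
            rw [this]
            have : (j - (0 + 1 : ℕ)).toNat = m - 1 := by push_cast; omega
            rw [this]
        · rw [if_neg hT]
          exact Submodule.zero_mem _
      · funext T
        rw [Dmap_apply]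
        rw [empty0 T]
        have hrmem : r ∈ (∅ : Finset (Fin n))ᶜ := by simp
        rw [Finset.sum_eq_single_of_mem ⟨r, hrmem⟩ (Finset.mem_attach _ _)]
        · simp only [Finset.filter_empty, Finset.card_empty, pow_zero, one_smul]
          rw [if_pos (by simp)]
          rw [X, MvPolynomial.monomial_mul, one_mul]
          have hadd : Finsupp.single r 1 + (c - ee r) = c := by
            rw [add_comm]; exact tsub_add_cancel_of_le herc
          rw [hadd]
        · intro t _ hne
          have htr : t.1 ≠ r := fun h => hne (Subtype.ext h)
          rw [if_neg (by simp [htr])]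
          rw [mul_zero, smul_zero]

end N2
namespace N2

open MvPolynomial Finsupp

variable {kk : Type} [Field kk] {n : ℕ} {I : Ideal (MvPolynomial (Fin n) kk)} {d : ℕ}

lemma tsub_single_eq_self {b : Fin n →₀ ℕ} {t : Fin n} (h : b t = 0) : b - ee t = b := by
  ext i
  rw [Finsupp.tsub_apply, Finsupp.single_apply]
  by_cases hip : t = i
  · subst hip; omega
  · simp [hip]

/-- The multidegree-`b` cycle assembled from a coefficient vector. -/
noncomputable def mkC (b : Fin n →₀ ℕ) : (Fin n → kk) →ₗ[kk] KModule kk n 1 where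
  toFun v := fun T => monomial (b - ee (pick1 T)) (v (pick1 T))
  map_add' v w := by
    funext T
    simp [map_add]
  map_smul' c v := by
    funext T
    simp [MvPolynomial.smul_monomial]

lemma mkC_sing (b : Fin n →₀ ℕ) (v : Fin n → kk) (t : Fin n) :
    mkC b v (sing t) = monomial (b - ee t) (v t) := by
  simp [mkC, pick1_sing]

/-- coefficient vector of `f` in multidegree `b`. -/
noncomputable def cvec (f : KModule kk n 1) (b : Fin n →₀ ℕ) : Fin n → kk :=
  fun t => coeff (b - ee t) (f (sing t))

/-- the finite set of multidegrees relevant to `f`. -/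
noncomputable def Bset (f : KModule kk n 1) : Finset (Fin n →₀ ℕ) :=
  Finset.univ.biUnion fun t : Fin n => (f (sing t)).support.image (fun c => c + ee t)

lemma deg_Bset {f : KModule kk n 1} {m : ℕ}
    (hhom : ∀ t, ∀ c ∈ (f (sing t)).support, degExp c = m)
    {b : Fin n →₀ ℕ} (hb : b ∈ Bset f) : degExp b = m + 1 := by
  obtain ⟨t, -, hbt⟩ := Finset.mem_biUnion.mp hb
  obtain ⟨c, hc, rfl⟩ := Finset.mem_image.mp hbt
  rw [degExp_add, degExp_single, hhom t c hc]

lemma decomp {f : KModule kk n 1} {m : ℕ}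
    (hhom : ∀ t, ∀ c ∈ (f (sing t)).support, degExp c = m) :
    f = ∑ b ∈ Bset f, mkC b (cvec f b) := by
  funext T
  rw [Finset.sum_apply]
  set p := pick1 T with hp
  have hterm : ∀ b, mkC b (cvec f b) T = monomial (b - ee p) (coeff (b - ee p) (f (sing p))) :=
    fun b => rfl
  conv_lhs => rw [← sing_pick1 T]
  simp only [hterm]
  have himg : ((f (sing p)).support.image (fun c => c + ee p)) ⊆ Bset f := by
    intro b hb
    exact Finset.mem_biUnion.mpr ⟨p, Finset.mem_univ p, hb⟩
  have hzero : ∀ b ∈ Bset f, b ∉ (f (sing p)).support.image (fun c => c + ee p) →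
      monomial (b - ee p) (coeff (b - ee p) (f (sing p))) = 0 := by
    intro b hb hbni
    have hco : coeff (b - ee p) (f (sing p)) = 0 := by
      by_contra hne
      have hmem : (b - ee p) ∈ (f (sing p)).support := MvPolynomial.mem_support_iff.mpr hne
      by_cases hep : ee p ≤ b
      · exact hbni (Finset.mem_image.mpr ⟨b - ee p, hmem, tsub_add_cancel_of_le hep⟩)
      · have hbp : b p = 0 := by
          by_contra h0
          exact hep (Finsupp.single_le_iff.mpr (by omega))
        have hbb : b - ee p = b := tsub_single_eq_self hbp
        have h1 : degExp b = m := by rw [← hbb]; exact hhom p _ hmem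
        have h2 : degExp b = m + 1 := deg_Bset hhom hb
        omega
    rw [hco, MvPolynomial.monomial_zero]
  rw [← Finset.sum_subset himg hzero]
  rw [Finset.sum_image (fun a _ b _ h => by
    have := congrArg (fun x => x - ee p) h
    simpa [add_tsub_cancel_right] using this)]
  rw [Finset.sum_congr rfl (fun c hc => by rw [add_tsub_cancel_right])]
  exact (support_sum_monomial_coeff _).symm

lemma cycle_sum {f : KModule kk n 1} (hker : Dmap kk n 0 f = 0) {m : ℕ}
    (hhom : ∀ t, ∀ c ∈ (f (sing t)).support, degExp c = m)
    {b : Fin n →₀ ℕ} (hbdeg : degExp b = m + 1) :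
    ∑ t : Fin n, cvec f b t = 0 := by
  classical
  have h0 : (Dmap kk n 0 f) ⟨∅, Finset.card_empty⟩ = 0 := by rw [hker]; rfl
  rw [Dmap_apply] at h0
  have h1 : ∑ t ∈ ((∅ : Finset (Fin n))ᶜ).attach, (X t.1 * f (sing t.1)) = 0 := by
    rw [← h0]
    refine (Finset.sum_congr rfl fun t _ => ?_).symm
    simp only [Finset.filter_empty, Finset.card_empty, pow_zero, one_smul]
    rfl
  have h2 := congrArg (coeff b) h1
  rw [MvPolynomial.coeff_sum, MvPolynomial.coeff_zero] at h2
  have h3 : ∑ t ∈ ((∅ : Finset (Fin n))ᶜ), coeff b (X t * f (sing t)) = 0 := by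
    rw [← h2]
    exact (Finset.sum_attach _ fun t => coeff b (X t * f (sing t))).symm
  have h4 : ∀ t : Fin n, coeff b (X t * f (sing t)) = cvec f b t := by
    intro t
    rw [MvPolynomial.coeff_X_mul']
    by_cases ht : t ∈ b.support
    · rw [if_pos ht]; rfl
    · rw [if_neg ht]
      have hbt : b t = 0 := notMem_support_iff.mp ht
      have hbb : b - ee t = b := tsub_single_eq_self hbt
      unfold cvec
      rw [hbb]
      by_contra hne
      have := hhom t b (MvPolynomial.mem_support_iff.mpr fun h => hne h.symm)
      omega
  have h5 : ∑ t ∈ ((∅ : Finset (Fin n))ᶜ), cvec f b t = 0 := by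
    rw [Finset.sum_congr rfl fun t _ => (h4 t).symm]
    exact h3
  rw [← Finset.compl_empty]
  exact h5
lemma cvec_span {b : Fin n →₀ ℕ} (hb : d + 2 ≤ degExp b) (HG : HGam I d)
    {c : Fin n → kk} (hsum : ∑ t, c t = 0)
    (hsupp : ∀ t, c t ≠ 0 → ee t ≤ b ∧ monomial (b - ee t) (1 : kk) ∈ I) :
    c ∈ Submodule.span kk
      {v : Fin n → kk | ∃ s t, Edg I b s t ∧ v = Pi.single s 1 - Pi.single t 1} := by
  classical
  by_cases hc : c = 0
  · rw [hc]; exact Submodule.zero_mem _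
  · obtain ⟨t0, ht0⟩ : ∃ t0, c t0 ≠ 0 := by
      by_contra h
      push_neg at h
      exact hc (funext h)
    have hchain : ∀ s t : Fin n, GammaReach I b s t →
        Pi.single s (1 : kk) - Pi.single t 1 ∈ Submodule.span kk
          {v : Fin n → kk | ∃ s t, Edg I b s t ∧ v = Pi.single s 1 - Pi.single t 1} := by
      intro s t h
      induction h with
      | refl => simp only [sub_self]; exact Submodule.zero_mem _
      | @tail mid fin hrt hE ih =>
        have hsplit : (Pi.single s 1 : Fin n → kk) - Pi.single fin 1 =
            ((Pi.single s 1 : Fin n → kk) - Pi.single mid 1) +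
              ((Pi.single mid 1 : Fin n → kk) - Pi.single fin 1) := by
          abel
        rw [hsplit]
        exact Submodule.add_mem _ ih (Submodule.subset_span ⟨mid, fin, hE, rfl⟩)
    have hrep : c = ∑ t : Fin n, c t • ((Pi.single t 1 : Fin n → kk) - Pi.single t0 1) := by
      funext r
      rw [Finset.sum_apply]
      have hterm : ∀ t, ((c t • ((Pi.single t 1 : Fin n → kk) - Pi.single t0 1) : Fin n → kk)) r =
          c t * (Pi.single t 1 : Fin n → kk) r - c t * (Pi.single t0 1 : Fin n → kk) r := by
        intro t
        simp [mul_sub]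
      rw [Finset.sum_congr rfl fun t _ => hterm t, Finset.sum_sub_distrib]
      have e1 : ∑ t : Fin n, c t * (Pi.single t 1 : Fin n → kk) r = c r := by
        rw [Finset.sum_eq_single r]
        · simp
        · intro t _ hne
          rw [Pi.single_eq_of_ne (Ne.symm hne), mul_zero]
        · intro h; exact absurd (Finset.mem_univ r) h
      have e2 : ∑ t : Fin n, c t * (Pi.single t0 1 : Fin n → kk) r =
          (∑ t : Fin n, c t) * (Pi.single t0 1 : Fin n → kk) r := by
        rw [Finset.sum_mul]
      rw [e1, e2, hsum, zero_mul, sub_zero]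
    rw [hrep]
    apply Submodule.sum_mem
    intro t _
    by_cases hct : c t = 0
    · rw [hct, zero_smul]; exact Submodule.zero_mem _
    · exact Submodule.smul_mem _ _ (hchain t t0
        (HG b t t0 hb (hsupp t hct).1 (hsupp t hct).2 (hsupp t0 ht0).1 (hsupp t0 ht0).2))
lemma edge_boundary {j : ℤ} (hj2 : (2 : ℤ) ≤ j) {b : Fin n →₀ ℕ} (hbdeg : (degExp b : ℤ) = j)
    {s t : Fin n} (hE : Edg I b s t) :
    mkC b ((Pi.single s 1 : Fin n → kk) - Pi.single t 1) ∈
      Submodule.map (Dmap kk n 1) (koszulStrand I (1 + 1) j) := by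
  classical
  obtain ⟨hst, hle, hmem⟩ := hE
  set v : Fin n → kk := (Pi.single s 1 : Fin n → kk) - Pi.single t 1 with hv
  set ε : kk := if s < t then -1 else 1 with hε
  refine Submodule.mem_map.mpr
    ⟨(fun U => if U.1 = {s, t} then monomial (b - (ee s + ee t)) ε else 0), ?_, ?_⟩
  · rw [mem_strand]
    intro U
    by_cases hU : U.1 = {s, t}
    · rw [if_pos hU, mem_gp (by push_cast; omega)]
      refine ⟨mon_smul_mem hmem ε, ?_⟩
      intro c hc
      rw [support_monomial_sub hc]
      have h2 : degExp (ee s + ee t) = 2 := by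
        rw [degExp_add, degExp_single, degExp_single]
      have h1 : degExp (b - (ee s + ee t)) + 2 = degExp b := by
        rw [← h2, ← degExp_add, tsub_add_cancel_of_le hle]
      have h3 : ((1 + 1 : ℕ) : ℤ) = 2 := by norm_num
      omega
    · rw [if_neg hU]; exact Submodule.zero_mem _
  · funext T
    rw [Dmap_apply]
    obtain ⟨r, hT⟩ := Finset.card_eq_one.mp T.2
    have hTr : T = sing r := Subtype.ext hT
    have hrhs : mkC b v T = monomial (b - ee r) (v r) := by rw [hTr, mkC_sing]
    rw [hrhs]
    by_cases hrs : r = s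
    · subst hrs
      have htm : t ∈ T.1ᶜ := by
        rw [hT]
        simp [Ne.symm hst]
      rw [Finset.sum_eq_single_of_mem ⟨t, htm⟩ (Finset.mem_attach _ _) ?_]
      · have hins : insert t T.1 = {r, t} := by
          rw [hT, Finset.pair_comm]
        have hfilter : (T.1.filter (fun x => x < t)).card = if r < t then 1 else 0 := by
          rw [hT, Finset.filter_singleton]
          by_cases h : r < t
          · rw [if_pos h, if_pos h, Finset.card_singleton]
          · rw [if_neg h, if_neg h, Finset.card_empty]
        have hexp : Finsupp.single t 1 + (b - (ee r + ee t)) = b - ee r := by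
          have h1 : b - (ee r + ee t) = (b - ee r) - ee t := tsub_add_eq_tsub_tsub b _ _
          have h2 : ee t ≤ b - ee r := le_tsub_of_add_le_left hle
          rw [h1, add_comm, tsub_add_cancel_of_le h2]
        rw [if_pos hins, X, MvPolynomial.monomial_mul, one_mul, hexp,
          MvPolynomial.smul_monomial, hfilter]
        congr 1
        have hvs : v r = 1 := by
          rw [hv, Pi.sub_apply, Pi.single_eq_same, Pi.single_eq_of_ne hst, sub_zero]
        rw [hvs, hε]
        by_cases h : r < t
        · simp [h]
        · simp [h]
      · intro q _ hqne
        have hq1 : q.1 ≠ t := fun h => hqne (Subtype.ext h)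
        have hq2 : q.1 ∉ T.1 := Finset.mem_compl.mp q.2
        have hno : insert q.1 T.1 ≠ {r, t} := by
          intro hcon
          have hqmem : q.1 ∈ ({r, t} : Finset (Fin n)) := hcon ▸ Finset.mem_insert_self _ _
          simp only [Finset.mem_insert, Finset.mem_singleton] at hqmem
          rcases hqmem with h | h
          · exact hq2 (by rw [h, hT]; exact Finset.mem_singleton_self _)
          · exact hq1 h
        rw [if_neg hno, mul_zero, smul_zero]
    · by_cases hrt : r = t
      · subst hrt
        have hsm : s ∈ T.1ᶜ := by
          rw [hT]
          simp [hst]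
        rw [Finset.sum_eq_single_of_mem ⟨s, hsm⟩ (Finset.mem_attach _ _) ?_]
        · have hins : insert s T.1 = {s, r} := by rw [hT]
          have hfilter : (T.1.filter (fun x => x < s)).card = if r < s then 1 else 0 := by
            rw [hT, Finset.filter_singleton]
            by_cases h : r < s
            · rw [if_pos h, if_pos h, Finset.card_singleton]
            · rw [if_neg h, if_neg h, Finset.card_empty]
          have hexp : Finsupp.single s 1 + (b - (ee s + ee r)) = b - ee r := by
            have h1 : b - (ee s + ee r) = (b - ee r) - ee s := by
              rw [add_comm]
              exact tsub_add_eq_tsub_tsub b _ _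
            have h2 : ee s ≤ b - ee r := le_tsub_of_add_le_right hle
            rw [h1, add_comm, tsub_add_cancel_of_le h2]
          rw [if_pos hins, X, MvPolynomial.monomial_mul, one_mul, hexp,
            MvPolynomial.smul_monomial, hfilter]
          congr 1
          have hvt : v r = -1 := by
            rw [hv, Pi.sub_apply, Pi.single_eq_same, Pi.single_eq_of_ne (Ne.symm hst), zero_sub]
          rw [hvt, hε]
          rcases lt_or_gt_of_ne hst with h | h
          · simp [h, not_lt_of_gt h]
          · simp [h, not_lt_of_gt h]
        · intro q _ hqne
          have hq1 : q.1 ≠ s := fun h => hqne (Subtype.ext h)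
          have hq2 : q.1 ∉ T.1 := Finset.mem_compl.mp q.2
          have hno : insert q.1 T.1 ≠ {s, r} := by
            intro hcon
            have hqmem : q.1 ∈ ({s, r} : Finset (Fin n)) := hcon ▸ Finset.mem_insert_self _ _
            simp only [Finset.mem_insert, Finset.mem_singleton] at hqmem
            rcases hqmem with h | h
            · exact hq1 h
            · exact hq2 (by rw [h, hT]; exact Finset.mem_singleton_self _)
          rw [if_neg hno, mul_zero, smul_zero]
      · rw [Finset.sum_eq_zero ?_]
        · have hvr : v r = 0 := by
            rw [hv, Pi.sub_apply, Pi.single_eq_of_ne hrs, Pi.single_eq_of_ne hrt, sub_zero]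
          rw [hvr, MvPolynomial.monomial_zero]
        · intro q _
          have hno : insert q.1 T.1 ≠ {s, t} := by
            intro hcon
            have hrmem : r ∈ ({s, t} : Finset (Fin n)) := by
              rw [← hcon]
              exact Finset.mem_insert_of_mem (by rw [hT]; exact Finset.mem_singleton_self _)
            simp only [Finset.mem_insert, Finset.mem_singleton] at hrmem
            tauto
          rw [if_neg hno, mul_zero, smul_zero]
lemma tor1 (hmon : IsMonomialIdeal I)
    (hdeg : ∀ a : Fin n →₀ ℕ, IsMinGen I a → degExp a = d) (HG : HGam I d) {j : ℤ}
    (hj : j ≠ (d : ℤ) + 1) :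
    koszulStrand I 1 j ⊓ LinearMap.ker (Dout kk n 1) ≤
      Submodule.map (Dmap kk n 1) (koszulStrand I (1 + 1) j) := by
  intro f hf
  have hstr : ∀ T, f T ∈ gradedPiece I (j - 1) := by
    intro T
    have := mem_strand.mp hf.1 T
    norm_num at this
    exact this
  have hker : Dmap kk n 0 f = 0 := by
    have h : f ∈ LinearMap.ker (Dout kk n 1) := hf.2
    exact LinearMap.mem_ker.mp h
  rcases lt_or_ge j ((d : ℤ) + 2) with hsmall | hbig
  · have hf0 : f = 0 := by
      funext T
      rcases lt_or_ge (j - 1) 0 with hneg | hpos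
      · have := hstr T; rw [gp_bot hneg] at this; simpa using this
      · obtain ⟨hT1, hT2⟩ := (mem_gp hpos).mp (hstr T)
        have hsup : (f T).support = ∅ := by
          rw [Finset.eq_empty_iff_forall_notMem]
          intro c hc
          have h1 := hT2 c hc
          have h2 := deg_ge_of_mon_mem hdeg (mon_mem_of_mem_support hmon hT1 hc)
          omega
        exact MvPolynomial.support_eq_empty.mp hsup
    rw [hf0]
    exact Submodule.zero_mem _
  · set m : ℕ := (j - 1).toNat with hm
    have hmj : (m : ℤ) = j - 1 := Int.toNat_of_nonneg (by omega)
    have hhom : ∀ t, ∀ c ∈ (f (sing t)).support, degExp c = m :=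
      fun t c hc => ((mem_gp (by omega)).mp (hstr (sing t))).2 c hc
    rw [decomp hhom]
    apply Submodule.sum_mem
    intro b hb
    have hbdeg : degExp b = m + 1 := deg_Bset hhom hb
    have hsupp : ∀ t, cvec f b t ≠ 0 → ee t ≤ b ∧ monomial (b - ee t) (1 : kk) ∈ I := by
      intro t hct
      have hmem : b - ee t ∈ (f (sing t)).support := MvPolynomial.mem_support_iff.mpr hct
      have h1 : ee t ≤ b := by
        by_contra h
        have hbt : b t = 0 := by
          by_contra h0
          exact h (Finsupp.single_le_iff.mpr (by omega))
        have hbb : b - ee t = b := tsub_single_eq_self hbt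
        have hx := hhom t _ hmem
        rw [hbb] at hx
        omega
      exact ⟨h1, mon_mem_of_mem_support hmon ((mem_gp (by omega)).mp (hstr (sing t))).1 hmem⟩
    have hcyc := cycle_sum hker hhom hbdeg
    have hbge : d + 2 ≤ degExp b := by omega
    have hspan := cvec_span hbge HG hcyc hsupp
    refine Submodule.span_induction ?_ ?_ ?_ ?_ hspan
    · rintro v ⟨s, t, hE, rfl⟩
      exact edge_boundary (by omega) (by omega) hE
    · rw [map_zero]
      exact Submodule.zero_mem _
    · intro x y hx hy hxm hym
      rw [map_add]
      exact Submodule.add_mem _ hxm hym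
    · intro a x hx hxm
      rw [map_smul]
      exact Submodule.smul_mem _ _ hxm
lemma coeff_gp_zero {jj : ℤ} {p : MvPolynomial (Fin n) kk} (hp : p ∈ gradedPiece I jj)
    {c : Fin n →₀ ℕ} (hc : (degExp c : ℤ) ≠ jj) : coeff c p = 0 := by
  rcases lt_or_ge jj 0 with h | h
  · rw [gp_bot h, Submodule.mem_bot] at hp
    rw [hp, MvPolynomial.coeff_zero]
  · obtain ⟨-, h2⟩ := (mem_gp h).mp hp
    by_contra hne
    have := h2 c (MvPolynomial.mem_support_iff.mpr hne)
    omega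

/-- symmetrized coordinate access for `KModule kk n 2`. -/
noncomputable def Wfun (g : KModule kk n 2) (q r : Fin n) : MvPolynomial (Fin n) kk :=
  if h : q ≠ r then g ⟨{q, r}, Finset.card_pair h⟩ else 0

lemma Wfun_of_ne (g : KModule kk n 2) {q r : Fin n} (h : q ≠ r) :
    Wfun g q r = g ⟨{q, r}, Finset.card_pair h⟩ := dif_pos h

lemma Wfun_symm (g : KModule kk n 2) (q r : Fin n) : Wfun g q r = Wfun g r q := by
  unfold Wfun
  by_cases h : q = r
  · subst h; rfl
  · rw [dif_pos h, dif_pos (Ne.symm h)]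
    exact congrArg g (Subtype.ext (Finset.pair_comm q r))

lemma Wfun_gp {g : KModule kk n 2} {j : ℤ} (hg : g ∈ koszulStrand I (1 + 1) j)
    (q r : Fin n) : Wfun g q r ∈ gradedPiece I (j - ((1 + 1 : ℕ) : ℤ)) := by
  unfold Wfun
  by_cases h : q ≠ r
  · rw [dif_pos h]; exact mem_strand.mp hg _
  · rw [dif_neg h]; exact Submodule.zero_mem _

lemma sgn_add {q r : Fin n} (h : q ≠ r) :
    ((-1 : kk) ^ (if r < q then 1 else 0)) + ((-1 : kk) ^ (if q < r then 1 else 0)) = 0 := by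
  rcases lt_or_gt_of_ne h with hl | hl
  · rw [if_neg (asymm hl), if_pos hl]
    norm_num
  · rw [if_pos hl, if_neg (asymm hl)]
    norm_num

lemma degExp_tsub_pair {b : Fin n →₀ ℕ} {q r : Fin n} (hq : ee q ≤ b) (hr : b r = 0)
    (hqr : q ≠ r) : degExp (b - ee r - ee q) + 1 = degExp b := by
  rw [tsub_single_eq_self hr]
  exact degExp_tsub_single hq

lemma HGam_of_N (hmon : IsMonomialIdeal I)
    (hN : ∀ j : ℤ, TorNonzero I 1 j → j = (d : ℤ) + 1) : HGam I d := by
  classical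
  intro b s t hbdeg hs hsI ht htI
  by_contra hreach
  have hst : s ≠ t := fun h => hreach (h ▸ Relation.ReflTransGen.refl)
  set j : ℤ := (degExp b : ℤ) with hj
  set v : Fin n → kk := (Pi.single s 1 : Fin n → kk) - Pi.single t 1 with hv
  have hvs : v s = 1 := by
    rw [hv, Pi.sub_apply, Pi.single_eq_same, Pi.single_eq_of_ne hst, sub_zero]
  have hvt : v t = -1 := by
    rw [hv, Pi.sub_apply, Pi.single_eq_same, Pi.single_eq_of_ne (Ne.symm hst), zero_sub]
  have hvo : ∀ r, r ≠ s → r ≠ t → v r = 0 := by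
    intro r h1 h2
    rw [hv, Pi.sub_apply, Pi.single_eq_of_ne h1, Pi.single_eq_of_ne h2, sub_zero]
  set f : KModule kk n 1 := mkC b v with hf
  have hfs : ∀ r, f (sing r) = monomial (b - ee r) (v r) := fun r => mkC_sing b v r
  have hfstrand : f ∈ koszulStrand I 1 j := by
    rw [mem_strand]
    intro T
    obtain ⟨r, hT⟩ := Finset.card_eq_one.mp T.2
    have hTr : T = sing r := Subtype.ext hT
    rw [hTr, hfs r]
    have hpos : (0 : ℤ) ≤ j - ((1 : ℕ) : ℤ) := by push_cast; omega
    by_cases hrs : r = s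
    · subst hrs
      rw [hvs, mem_gp hpos]
      refine ⟨by simpa using hsI, ?_⟩
      intro c hc
      rw [support_monomial_sub hc]
      have := degExp_tsub_single hs
      omega
    · by_cases hrt : r = t
      · subst hrt
        rw [hvt, mem_gp hpos]
        refine ⟨mon_smul_mem htI (-1), ?_⟩
        intro c hc
        rw [support_monomial_sub hc]
        have := degExp_tsub_single ht
        omega
      · rw [hvo r hrs hrt, MvPolynomial.monomial_zero]
        exact Submodule.zero_mem _
  have hfker : f ∈ LinearMap.ker (Dout kk n 1) := by
    rw [LinearMap.mem_ker]
    show Dmap kk n 0 f = 0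
    have hval : ∀ q, X q * f (sing q) =
        if q = s then monomial b 1 else if q = t then monomial b (-1) else 0 := by
      intro q
      rw [hfs q]
      by_cases hq : q = s
      · rw [if_pos hq, hq, hvs, X, MvPolynomial.monomial_mul, one_mul]
        have hadd : Finsupp.single s 1 + (b - ee s) = b := by
          rw [add_comm]; exact tsub_add_cancel_of_le hs
        rw [hadd]
      · rw [if_neg hq]
        by_cases hq' : q = t
        · rw [if_pos hq', hq', hvt, X, MvPolynomial.monomial_mul, one_mul]
          have hadd : Finsupp.single t 1 + (b - ee t) = b := by
            rw [add_comm]; exact tsub_add_cancel_of_le ht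
          rw [hadd]
        · rw [if_neg hq', hvo q hq hq', MvPolynomial.monomial_zero, mul_zero]
    have key : ∑ q ∈ ((∅ : Finset (Fin n))ᶜ).attach, (X q.1 * f (sing q.1)) = 0 := by
      rw [Finset.sum_attach _ (fun q => X q * f (sing q))]
      rw [Finset.sum_congr (Finset.compl_empty) fun q _ => hval q]
      have hsub : ({s, t} : Finset (Fin n)) ⊆ Finset.univ := Finset.subset_univ _
      rw [← Finset.sum_subset hsub (fun x _ hx => by
        simp only [Finset.mem_insert, Finset.mem_singleton, not_or] at hx
        rw [if_neg hx.1, if_neg hx.2])]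
      rw [Finset.sum_pair hst, if_pos rfl, if_neg (Ne.symm hst), if_pos rfl]
      rw [← map_add]
      norm_num
    funext T
    rw [empty0 T, Dmap_apply]
    simp only [Pi.zero_apply]
    refine Eq.trans (Finset.sum_congr rfl fun q _ => ?_) key
    simp only [Finset.filter_empty, Finset.card_empty, pow_zero, one_smul]
    rfl
  have hnotin : f ∉ Submodule.map (Dmap kk n 1) (koszulStrand I (1 + 1) j) := by
    intro hmem
    obtain ⟨g, hg, hgf⟩ := Submodule.mem_map.mp hmem
    set C : Finset (Fin n) := Finset.univ.filter (fun r => GammaReach I b s r) with hC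
    have hsC : s ∈ C := by
      rw [hC, Finset.mem_filter]
      exact ⟨Finset.mem_univ _, Relation.ReflTransGen.refl⟩
    have htC : t ∉ C := by
      rw [hC, Finset.mem_filter]
      rintro ⟨-, h⟩
      exact hreach h
    have hCedge : ∀ r q, r ∈ C → Edg I b r q → q ∈ C := by
      intro r q hrC hE
      rw [hC, Finset.mem_filter] at hrC ⊢
      exact ⟨Finset.mem_univ _, hrC.2.tail hE⟩
    -- value of ℓ on f
    have hlf : ∑ r ∈ C, coeff (b - ee r) (f (sing r)) = 1 := by
      rw [Finset.sum_eq_single_of_mem s hsC (fun r _ hrs => by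
        rw [hfs r, MvPolynomial.coeff_monomial, if_pos rfl]
        exact hvo r hrs (fun h => htC (h ▸ ‹r ∈ C›)))]
      rw [hfs s, MvPolynomial.coeff_monomial, if_pos rfl, hvs]
    -- value of ℓ on the boundary
    have hWgp := fun q r => Wfun_gp (I := I) hg q r
    have hWI : ∀ q r, Wfun g q r ∈ I := by
      intro q r
      have h := hWgp q r
      have hpos : (0:ℤ) ≤ j - ((1+1 : ℕ) : ℤ) := by push_cast; omega
      exact ((mem_gp hpos).mp h).1
    have hcoeff : ∀ q r : Fin n, q ≠ r →
        coeff (b - ee r) (X q * Wfun g q r) =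
          (if ee q + ee r ≤ b then coeff (b - (ee q + ee r)) (Wfun g q r) else 0) := by
      intro q r hqr
      rw [MvPolynomial.coeff_X_mul']
      have hbr : (b - ee r) q = b q := by
        rw [Finsupp.tsub_apply, Finsupp.single_apply, if_neg (fun h => hqr (by rw [h]))]
        omega
      by_cases hle : ee q + ee r ≤ b
      · have hbq : 1 ≤ b q := by
          have h2 := Finsupp.le_def.mp hle q
          rw [Finsupp.add_apply, Finsupp.single_apply, Finsupp.single_apply] at h2
          rw [if_pos rfl, if_neg (fun h : r = q => hqr h.symm)] at h2
          omega
        rw [if_pos (by rw [Finsupp.mem_support_iff, hbr]; omega), if_pos hle]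
        congr 1
        rw [tsub_tsub, add_comm]
      · rw [if_neg hle]
        by_cases hmem : q ∈ (b - ee r).support
        · rw [if_pos hmem]
          -- then b r = 0
          have hbq : 1 ≤ b q := by
            have := Finsupp.mem_support_iff.mp hmem
            rw [hbr] at this
            omega
          have hbr0 : b r = 0 := by
            by_contra h0
            apply hle
            rw [Finsupp.le_def]
            intro i
            rw [Finsupp.add_apply, Finsupp.single_apply, Finsupp.single_apply]
            by_cases hiq : q = i
            · rw [if_pos hiq, if_neg (fun h : r = i => hqr (hiq.trans h.symm))]
              rw [← hiq]
              omega
            · rw [if_neg hiq]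
              by_cases hir : r = i
              · rw [if_pos hir, ← hir]
                omega
              · rw [if_neg hir]
                omega
          have h1 : degExp (b - ee r - ee q) + 1 = degExp b :=
            degExp_tsub_pair (Finsupp.single_le_iff.mpr hbq) hbr0 hqr
          have h2 : ((degExp (b - ee r - ee q)) : ℤ) ≠ j - ((1 + 1 : ℕ) : ℤ) := by
            rw [hj]
            push_cast
            omega
          exact coeff_gp_zero (hWgp q r) h2
        · rw [if_neg hmem]
    -- now compute the sum
    have hDg : ∀ r : Fin n, coeff (b - ee r) ((Dmap kk n 1 g) (sing r)) =
        ∑ q ∈ ({r} : Finset (Fin n))ᶜ, ((-1 : kk) ^ (if r < q then 1 else 0)) •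
          coeff (b - ee r) (X q * Wfun g q r) := by
      intro r
      rw [Dmap_apply]
      rw [show ∑ q ∈ ((sing r).1ᶜ).attach, ((-1 : kk) ^ (((sing r).1.filter
          (fun x => x < q.1)).card)) • (X q.1 * g ⟨insert q.1 (sing r).1, by
            rw [Finset.card_insert_of_notMem (Finset.mem_compl.mp q.2), (sing r).2]⟩) =
          ∑ q ∈ ((sing r).1ᶜ).attach, ((-1 : kk) ^ (if r < q.1 then 1 else 0)) •
            (X q.1 * Wfun g q.1 r) from Finset.sum_congr rfl fun q _ => by
        have hqr : q.1 ≠ r := by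
          have h := Finset.mem_compl.mp q.2
          simp only [sing] at h
          simpa using h
        congr 1
        · congr 1
          show (({r} : Finset (Fin n)).filter (fun x => x < q.1)).card = _
          rw [Finset.filter_singleton]
          by_cases h : r < q.1
          · rw [if_pos h, if_pos h, Finset.card_singleton]
          · rw [if_neg h, if_neg h, Finset.card_empty]
        · congr 1
          exact (congrArg g (Subtype.ext rfl)).trans (Wfun_of_ne g hqr).symm]
      rw [MvPolynomial.coeff_sum]
      rw [Finset.sum_congr rfl (fun q (_ : q ∈ ((sing r).1ᶜ).attach) =>
        MvPolynomial.coeff_smul (b - ee r) _ _)]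
      exact Finset.sum_attach _ (fun q => ((-1 : kk) ^ (if r < q then 1 else 0)) •
        coeff (b - ee r) (X q * Wfun g q r))
    -- each inner sum restricts to C.erase r, for r ∈ C
    have hPhiC : ∀ r q : Fin n, q ≠ r → r ∈ C → q ∉ C →
        ((-1 : kk) ^ (if r < q then 1 else 0)) • coeff (b - ee r) (X q * Wfun g q r) = 0 := by
      intro r q hqr hrC hqC
      rw [hcoeff q r hqr]
      by_cases hle : ee q + ee r ≤ b
      · rw [if_pos hle]
        by_cases hz : coeff (b - (ee q + ee r)) (Wfun g q r) = 0
        · rw [hz, smul_zero]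
        · exfalso
          apply hqC
          refine hCedge r q hrC ⟨fun h => hqr h.symm, ?_, ?_⟩
          · rw [add_comm]; exact hle
          · rw [add_comm]
            exact mon_mem_of_mem_support hmon (hWI q r) (MvPolynomial.mem_support_iff.mpr hz)
      · rw [if_neg hle, smul_zero]
    -- antisymmetry
    have hanti : ∀ r q : Fin n, q ≠ r →
        (((-1 : kk) ^ (if r < q then 1 else 0)) • coeff (b - ee r) (X q * Wfun g q r)) +
          (((-1 : kk) ^ (if q < r then 1 else 0)) • coeff (b - ee q) (X r * Wfun g r q)) = 0 := by
      intro r q hqr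
      rw [hcoeff q r hqr, hcoeff r q (fun h => hqr h.symm)]
      have hVsymm : (if ee q + ee r ≤ b then coeff (b - (ee q + ee r)) (Wfun g q r) else 0) =
          (if ee r + ee q ≤ b then coeff (b - (ee r + ee q)) (Wfun g r q) else 0) := by
        rw [add_comm (ee r) (ee q), Wfun_symm g r q]
      rw [← hVsymm, smul_eq_mul, smul_eq_mul, ← add_mul, sgn_add hqr, zero_mul]
    -- conclude ℓ (D g) = 0
    have hlD : ∑ r ∈ C, coeff (b - ee r) ((Dmap kk n 1 g) (sing r)) = 0 := by
      rw [Finset.sum_congr rfl fun r _ => hDg r]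
      have hrestrict : ∀ r ∈ C, ∑ q ∈ ({r} : Finset (Fin n))ᶜ,
          ((-1 : kk) ^ (if r < q then 1 else 0)) • coeff (b - ee r) (X q * Wfun g q r) =
          ∑ q ∈ C.erase r, ((-1 : kk) ^ (if r < q then 1 else 0)) •
            coeff (b - ee r) (X q * Wfun g q r) := by
        intro r hrC
        refine (Finset.sum_subset ?_ ?_).symm
        · intro q hq
          have := Finset.mem_erase.mp hq
          simpa using this.1
        · intro q hq1 hq2
          have hqr : q ≠ r := by simpa using hq1
          have hqC : q ∉ C := fun h => hq2 (Finset.mem_erase.mpr ⟨hqr, h⟩)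
          exact hPhiC r q hqr hrC hqC
      rw [Finset.sum_congr rfl hrestrict]
      rw [Finset.sum_sigma']
      refine Finset.sum_involution (fun p _ => ⟨p.2, p.1⟩) ?_ ?_ ?_ ?_
      · intro p hp
        have hmem := Finset.mem_sigma.mp hp
        have hne : p.2 ≠ p.1 := (Finset.mem_erase.mp hmem.2).1
        exact hanti p.1 p.2 hne
      · intro p hp _
        have hne : p.2 ≠ p.1 := (Finset.mem_erase.mp (Finset.mem_sigma.mp hp).2).1
        intro hcon
        exact hne (congrArg Sigma.fst hcon)
      · intro p hp
        have hmem := Finset.mem_sigma.mp hp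
        have hne : p.2 ≠ p.1 := (Finset.mem_erase.mp hmem.2).1
        exact Finset.mem_sigma.mpr ⟨Finset.mem_of_mem_erase hmem.2,
          Finset.mem_erase.mpr ⟨fun h => hne h.symm, hmem.1⟩⟩
      · intro p hp
        rfl
    rw [hgf] at hlD
    rw [hlf] at hlD
    exact one_ne_zero hlD
  have htor : TorNonzero I 1 j := by
    unfold TorNonzero
    intro hle
    exact hnotin (hle ⟨hfstrand, hfker⟩)
  have := hN j htor
  omega
end N2
/-- **Lemma 2.3.** A monomial ideal `I` generated in degree `d` satisfies property `N_2`
if and only if the graph `G_I(u,v)` is connected for all minimal generators `u, v` of `I`. -/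
theorem satisfiesN2_iff_graphs_connected (kk : Type) [Field kk] (n d : ℕ)
    (I : Ideal (MvPolynomial (Fin n) kk)) (hmon : IsMonomialIdeal I)
    (hdeg : ∀ a : Fin n →₀ ℕ, IsMinGen I a → degExp a = d) :
    SatisfiesN I d 2 ↔
      ∀ u v : Fin n →₀ ℕ, IsMinGen I u → IsMinGen I v → GIConnected I d u v := by
  constructor
  · intro hsat u v hu hv
    have hN1 : ∀ j : ℤ, TorNonzero I 1 j → j = (d : ℤ) + 1 := by
      intro j hj
      have h := hsat 1 (by norm_num) j hj
      exact_mod_cast h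
    exact N2.conn_of_HGam hdeg (N2.HGam_of_N hmon hN1) u v hu hv
  · intro hconn
    have HG := N2.HGam_of_conn hdeg hconn
    intro i hi j htor
    interval_cases i
    · by_contra hne
      have hj : j ≠ (d : ℤ) := by
        intro h
        apply hne
        rw [h]
        push_cast
        ring
      exact htor (N2.tor0 hmon hdeg hj)
    · by_contra hne
      have hj : j ≠ (d : ℤ) + 1 := by
        intro h
        apply hne
        rw [h]
        push_cast
        ring
      exact htor (N2.tor1 hmon hdeg HG hj)
end

section
/- Let n and d be positive integers with d ≥ 2 and n ≥ d. Then g(n,d) − 1 ≤ f(n,d) ≤ g(n,d); moreover, f(n,d) = g(n,d) − 1 if and only if n = (d+1)k + s for some integers k ≥ 1 and s with ⌊(d+1)/2⌋ < s ≤ d. -/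
/- # Preliminary definitions

We work in the polynomial ring `S = k[x_1,…,x_n]`, realized as `MvPolynomial (Fin n) kk`.

* Graded pieces of `Tor_i^S(M, k)` are realized via the (graded) Koszul complex
  `M ⊗ Λ•(S^n)`: the degree-`j` strand in homological degree `i` is the complex
  whose `i`-th term is the direct sum over `i`-subsets `T` of the variables of the
  degree `j - i` graded piece of `M`.  `TorNonzero` expresses nonvanishing of the
  homology of this strand, i.e. `Tor_i^S(M, k)_j ≠ 0`.
* `reg` is the Castelnuovo–Mumford regularity `max { j - i | Tor_i(M,k)_j ≠ 0 }`.
* `SatisfiesN I d p` says the minimal free resolution of `I` is linear for the first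
  `p - 1` steps (with generators in degree `d`), i.e. `Tor_i(I,k)_j = 0` unless
  `j = d + i`, for all `i < p`.  `SatisfiesN I d 2` is "linearly presented". -/

open MvPolynomial

/-- **Lemma 2.10.** For `d ≥ 2` and `n ≥ d`: `g(n,d) - 1 ≤ f(n,d) ≤ g(n,d)`, and
`f(n,d) = g(n,d) - 1` iff `n = (d+1)k + s` for some `k ≥ 1` and `⌊(d+1)/2⌋ < s ≤ d`. -/
theorem fval_gval_compare (n d : ℕ) (hd : 2 ≤ d) (hn : d ≤ n) :
    (gval n d - 1 ≤ fval n d ∧ fval n d ≤ gval n d) ∧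
    (fval n d = gval n d - 1 ↔
      ∃ k s : ℕ, 1 ≤ k ∧ (d + 1) / 2 < s ∧ s ≤ d ∧ n = (d + 1) * k + s) := by
  obtain ⟨e, rfl⟩ : ∃ e, d = e + 2 := ⟨d - 2, by omega⟩
  have h33 : e + 2 + 1 = e + 3 := rfl
  simp only [h33]
  rcases eq_or_lt_of_le hn with hne | hne
  · -- n = d case
    subst hne
    have hf : fval (e + 2) (e + 2) = e + 2 := by simp [fval]
    have hg : gval (e + 2) (e + 2) = e + 2 := by
      simp only [gval, h33]
      rw [Nat.div_eq_of_lt (by omega), Nat.div_eq_of_lt (by omega)]; omega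
    rw [hf, hg]
    refine ⟨⟨by omega, by omega⟩, ?_, ?_⟩
    · intro h; omega
    · rintro ⟨k, s, hk, hs1, hs2, hn'⟩
      have : e + 3 ≤ (e + 3) * k := Nat.le_mul_of_pos_right _ hk
      omega
  · -- n > d case
    obtain ⟨q, r, hr, hn_eq⟩ : ∃ q r, r < e + 3 ∧ n = (e + 3) * q + r :=
      ⟨n / (e + 3), n % (e + 3), Nat.mod_lt _ (by omega), (Nat.div_add_mod n (e + 3)).symm⟩
    have hmodr : n % (e + 3) = r := by
      rw [hn_eq, Nat.mul_add_mod, Nat.mod_eq_of_lt hr]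
    have hdivq : n / (e + 3) = q := by
      rw [hn_eq, Nat.mul_add_div (by omega), Nat.div_eq_of_lt hr, add_zero]
    have hPQ : (e + 3) * q = (e + 1) * q + 2 * q := by ring
    have hq1 : 1 ≤ q := by
      rcases Nat.eq_zero_or_pos q with h | h
      · rw [h, mul_zero] at hn_eq; omega
      · exact h
    -- compute (n-1)/(e+3)
    have hB : ((n - 1) / (e + 3) = q - 1 ∧ r = 0) ∨ ((n - 1) / (e + 3) = q ∧ 1 ≤ r) := by
      rcases Nat.eq_zero_or_pos r with h0 | h0
      · left
        obtain ⟨q1, rfl⟩ : ∃ q1, q = q1 + 1 := ⟨q - 1, by omega⟩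
        have e1 : (e + 3) * (q1 + 1) = (e + 3) * q1 + (e + 3) := by ring
        have e2 : n - 1 = (e + 3) * q1 + (e + 2) := by omega
        rw [e2, Nat.mul_add_div (by omega), Nat.div_eq_of_lt (by omega)]
        exact ⟨rfl, h0⟩
      · right
        have e2 : n - 1 = (e + 3) * q + (r - 1) := by omega
        rw [e2, Nat.mul_add_div (by omega), Nat.div_eq_of_lt (by omega)]
        exact ⟨rfl, h0⟩
    -- compute (e+1)*n/(e+3)
    have e3 : (e + 1) * n = (e + 3) * ((e + 1) * q) + (e + 1) * r := by rw [hn_eq]; ring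
    have hC : (e + 1) * n / (e + 3) = (e + 1) * q + (e + 1) * r / (e + 3) := by
      rw [e3, Nat.mul_add_div (by omega)]
    have ht : ((e + 1) * r / (e + 3) = 0 ∧ r = 0) ∨
        ((e + 1) * r / (e + 3) = r - 1 ∧ 1 ≤ r ∧ 2 * r ≤ e + 3) ∨
        ((e + 1) * r / (e + 3) = r - 2 ∧ e + 4 ≤ 2 * r ∧ 2 ≤ r) := by
      rcases Nat.eq_zero_or_pos r with h0 | h0
      · left; simp [h0]
      · rcases le_or_gt (2 * r) (e + 3) with h1 | h1
        · right; left
          refine ⟨?_, h0, h1⟩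
          obtain ⟨r1, rfl⟩ : ∃ r1, r = r1 + 1 := ⟨r - 1, by omega⟩
          have e4 : (e + 1) * (r1 + 1) = (e + 3) * r1 + (e + 1 - 2 * r1) := by
            zify [show 2 * r1 ≤ e + 1 by omega]; ring
          rw [e4, Nat.mul_add_div (by omega), Nat.div_eq_of_lt (by omega)]
          omega
        · right; right
          refine ⟨?_, by omega, by omega⟩
          have e4 : (e + 1) * r = (e + 3) * (r - 2) + (2 * (e + 3) - 2 * r) := by
            zify [show 2 ≤ r by omega, show 2 * r ≤ 2 * (e + 3) by omega]; ring
          rw [e4, Nat.mul_add_div (by omega), Nat.div_eq_of_lt (by omega)]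
          omega
    have hfval : fval n (e + 2) = (e + 1) * q + (e + 1) * r / (e + 3) + 1 := by
      simp only [fval, if_neg (by omega : ¬ n < e + 2), if_neg (by omega : ¬ n = e + 2)]
      rw [show e + 2 - 1 = e + 1 from rfl, h33, hC]
    have hgval : gval n (e + 2) = n - q - ((n - 1) / (e + 3)) := by
      simp only [gval, h33, hdivq]
    refine ⟨⟨?_, ?_⟩, ?_, ?_⟩
    · rw [hfval, hgval]; omega
    · rw [hfval, hgval]; omega
    · intro h
      rw [hfval, hgval] at h
      exact ⟨q, r, hq1, by omega, by omega, hn_eq⟩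
    · rintro ⟨k, s, hk, hs1, hs2, hn'⟩
      have hsr : s = r := by
        rw [← hmodr, hn', Nat.mul_add_mod, Nat.mod_eq_of_lt (by omega)]
      have hkq : k = q := by
        have h5 : (e + 3) * k = (e + 3) * q := by omega
        exact Nat.eq_of_mul_eq_mul_left (by omega) h5
      subst hsr hkq
      rw [hfval, hgval]
      omega
end

section
/- Let I be a squarefree monomial ideal generated in degree d in the polynomial ring S = k[x_1,...,x_{d+1}] in d+1 variables over a field k, and let f be a non-zero squarefree monomial with 1 ≤ deg(f) ≤ d. Then reg(I + (f)) ≤ d. -/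
/- # Preliminary definitions

We work in the polynomial ring `S = k[x_1,…,x_n]`, realized as `MvPolynomial (Fin n) kk`.

* Graded pieces of `Tor_i^S(M, k)` are realized via the (graded) Koszul complex
  `M ⊗ Λ•(S^n)`: the degree-`j` strand in homological degree `i` is the complex
  whose `i`-th term is the direct sum over `i`-subsets `T` of the variables of the
  degree `j - i` graded piece of `M`.  `TorNonzero` expresses nonvanishing of the
  homology of this strand, i.e. `Tor_i^S(M, k)_j ≠ 0`.
* `reg` is the Castelnuovo–Mumford regularity `max { j - i | Tor_i(M,k)_j ≠ 0 }`.
* `SatisfiesN I d p` says the minimal free resolution of `I` is linear for the first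
  `p - 1` steps (with generators in degree `d`), i.e. `Tor_i(I,k)_j = 0` unless
  `j = d + i`, for all `i < p`.  `SatisfiesN I d 2` is "linearly presented". -/

open MvPolynomial

namespace RegAux

open Finsupp

variable {kk : Type} [Field kk] {n : ℕ}

/-- exponent vector of the squarefree monomial `x_T` -/
noncomputable def eTv (T : Finset (Fin n)) : Fin n →₀ ℕ := ∑ s ∈ T, Finsupp.single s 1

lemma eTv_apply (T : Finset (Fin n)) (r : Fin n) : eTv T r = if r ∈ T then 1 else 0 := by
  classical
  rw [eTv, Finset.sum_apply']
  simp [Finsupp.single_apply]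

lemma eTv_mono {T U : Finset (Fin n)} (h : T ⊆ U) : eTv T ≤ eTv U := by
  rw [Finsupp.le_def]
  intro r
  rw [eTv_apply, eTv_apply]
  by_cases hr : r ∈ T
  · simp [hr, h hr]
  · simp [hr]

lemma eTv_insert {T : Finset (Fin n)} {t : Fin n} (h : t ∉ T) :
    eTv (insert t T) = eTv T + Finsupp.single t 1 := by
  rw [eTv, eTv, Finset.sum_insert h, add_comm]

lemma deg_univ (c : Fin n →₀ ℕ) : c.degree = ∑ r ∈ Finset.univ, c r := by
  rw [Finsupp.degree]
  exact Finset.sum_subset (Finset.subset_univ _)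
    (fun x _ hx => Finsupp.notMem_support_iff.mp hx)

lemma eTv_degree (T : Finset (Fin n)) : (eTv T).degree = T.card := by
  rw [deg_univ]
  have : ∀ r ∈ Finset.univ, eTv T r = if r ∈ T then 1 else 0 := fun r _ => eTv_apply T r
  rw [Finset.sum_congr rfl this, Finset.sum_ite_mem]
  simp

lemma degree_mono {c c' : Fin n →₀ ℕ} (h : c ≤ c') : c.degree ≤ c'.degree := by
  rw [deg_univ, deg_univ]
  exact Finset.sum_le_sum fun r _ => Finsupp.le_def.mp h r

lemma degree_add' (c c' : Fin n →₀ ℕ) : (c + c').degree = c.degree + c'.degree := by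
  rw [deg_univ, deg_univ, deg_univ, ← Finset.sum_add_distrib]
  rfl

lemma degree_tsub_single {c : Fin n →₀ ℕ} {s : Fin n} (h : 1 ≤ c s) :
    (c - Finsupp.single s 1).degree = c.degree - 1 := by
  rw [deg_univ, deg_univ, ← Finset.sum_erase_add _ _ (Finset.mem_univ s),
    ← Finset.sum_erase_add _ _ (Finset.mem_univ s)]
  have h1 : ∀ r ∈ Finset.univ.erase s, ((c - Finsupp.single s 1) : Fin n →₀ ℕ) r = c r := by
    intro r hr
    rw [Finsupp.tsub_apply, Finsupp.single_apply,
      if_neg (fun hh => (Finset.mem_erase.mp hr).1 hh.symm), tsub_zero]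
  rw [Finset.sum_congr rfl h1, Finsupp.tsub_apply, Finsupp.single_apply, if_pos rfl,
    Nat.add_sub_assoc h]

/-- the Koszul sign -/
noncomputable def sgn (kk : Type) [Field kk] {n : ℕ} (U : Finset (Fin n)) (t : Fin n) : kk :=
  (-1) ^ ((U.filter (fun r => r < t)).card)

lemma sgn_mul_self (U : Finset (Fin n)) (t : Fin n) : sgn kk U t * sgn kk U t = 1 := by
  rw [sgn, ← mul_pow]
  norm_num

lemma sgn_insert (U : Finset (Fin n)) {r : Fin n} (t : Fin n) (h : r ∉ U) :
    sgn kk (insert r U) t = (if r < t then -1 else 1) * sgn kk U t := by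
  rw [sgn, sgn, Finset.filter_insert]
  by_cases hrt : r < t
  · rw [if_pos hrt, if_pos hrt,
      Finset.card_insert_of_notMem (fun hc => h (Finset.mem_of_mem_filter _ hc)), pow_succ]
    ring
  · rw [if_neg hrt, if_neg hrt, one_mul]

lemma sgn_swap {U : Finset (Fin n)} {s t : Fin n} (hst : s ≠ t) (hs : s ∉ U) (ht : t ∉ U) :
    sgn kk (insert s U) t * sgn kk (insert t U) s = -(sgn kk U t * sgn kk U s) := by
  rw [sgn_insert U t hs, sgn_insert U s ht]
  rcases lt_or_gt_of_ne hst with h | h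
  · rw [if_pos h, if_neg (asymm h)]
    ring
  · rw [if_neg (asymm h), if_pos h]
    ring

end RegAux

namespace RegAux

variable {kk : Type} [Field kk] {n : ℕ}

lemma Dmap_apply (m : ℕ) (f : KModule kk n (m + 1)) (T : {T : Finset (Fin n) // T.card = m}) :
    Dmap kk n m f T = ∑ t ∈ (T.1ᶜ).attach,
      sgn kk T.1 t.1 • (X t.1 * f ⟨insert t.1 T.1, by
        rw [Finset.card_insert_of_notMem (Finset.mem_compl.mp t.2), T.2]⟩) := rfl

end RegAux

namespace RegAux

variable {kk : Type} [Field kk] {n : ℕ}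

lemma X_mul_monomial_step {b : Fin n →₀ ℕ} {T : Finset (Fin n)} {t : Fin n} (htT : t ∉ T)
    (hb : eTv (insert t T) ≤ b) (c : kk) :
    X t * monomial (b - eTv (insert t T)) c = monomial (b - eTv T) c := by
  have hX : (X t : MvPolynomial (Fin n) kk) = monomial (Finsupp.single t 1) 1 := rfl
  rw [hX, monomial_mul, one_mul]
  have hle : Finsupp.single t 1 ≤ b - eTv T := by
    refine le_tsub_of_add_le_left ?_
    rw [← eTv_insert htT]
    exact hb
  have hexp : Finsupp.single t 1 + (b - eTv (insert t T)) = b - eTv T := by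
    rw [eTv_insert htT, tsub_add_eq_tsub_tsub]
    exact add_tsub_cancel_of_le hle
  rw [hexp]

lemma contraction (A : Set (Fin n →₀ ℕ)) (i N : ℕ)
    (b : Fin n →₀ ℕ) (s : Fin n) (lam : Finset (Fin n) → kk)
    (hlam0 : ∀ V, ¬ eTv V ≤ b → lam V = 0)
    (hmem : ∀ V, V.card = i → lam V ≠ 0 →
      (∃ a ∈ A, a ≤ b - eTv V) ∧ (b - eTv V).degree = N)
    (hsH : ∀ T : Finset (Fin n), T.card = i → s ∉ T → eTv T ≤ b →
      (∃ a ∈ A, a ≤ b - eTv T) →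
      eTv (insert s T) ≤ b ∧ ∃ a ∈ A, a ≤ b - eTv (insert s T))
    (hcyc : ∀ U : Finset (Fin n), U.card + 1 = i →
      ∑ t ∈ Uᶜ, sgn kk U t * lam (insert t U) = 0) :
    ∃ w : KModule kk n (i + 1),
      (∀ T' : {T : Finset (Fin n) // T.card = i + 1},
        w T' ∈ Ideal.span ((fun a => monomial a (1 : kk)) '' A) ∧
          (w T').IsHomogeneous (N - 1)) ∧
      Dmap kk n i w = fun T =>
        if eTv T.1 ≤ b then monomial (b - eTv T.1) (lam T.1) else 0 := by
  classical
  refine ⟨fun T' => if s ∈ T'.1 ∧ eTv T'.1 ≤ b then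
      sgn kk (T'.1.erase s) s • monomial (b - eTv T'.1) (lam (T'.1.erase s)) else 0, ?_, ?_⟩
  · -- membership
    intro T'
    beta_reduce
    by_cases hc : s ∈ T'.1 ∧ eTv T'.1 ≤ b
    · rw [if_pos hc]
      by_cases hl : lam (T'.1.erase s) = 0
      · rw [hl, monomial_zero, smul_zero]
        exact ⟨Submodule.zero_mem _, isHomogeneous_zero _ _ _⟩
      · have hVcard : (T'.1.erase s).card = i := by
          rw [Finset.card_erase_of_mem hc.1, T'.2]
          omega
        have hm := hmem _ hVcard hl
        have hins := hsH _ hVcard (Finset.notMem_erase s T'.1)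
          (by by_contra hcon; exact hl (hlam0 _ hcon)) hm.1
        rw [Finset.insert_erase hc.1] at hins
        constructor
        · refine Submodule.smul_of_tower_mem _ _ ?_
          rw [mem_ideal_span_monomial_image]
          intro xi hxi
          have hxi' := MvPolynomial.support_monomial_subset hxi
          rw [Finset.mem_singleton] at hxi'
          rw [hxi']
          exact hins.2
        · have h2 : 1 ≤ (b - eTv (T'.1.erase s)) s := by
            rw [Finsupp.tsub_apply, eTv_apply, if_neg (Finset.notMem_erase s T'.1), tsub_zero]
            have h3 := Finsupp.le_def.mp hc.2 s
            rw [eTv_apply, if_pos hc.1] at h3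
            omega
          have hdeg : (b - eTv T'.1).degree = N - 1 := by
            have h1 : b - eTv T'.1 = (b - eTv (T'.1.erase s)) - Finsupp.single s 1 := by
              conv_lhs => rw [← Finset.insert_erase hc.1]
              rw [eTv_insert (Finset.notMem_erase s T'.1), tsub_add_eq_tsub_tsub]
            rw [h1, degree_tsub_single h2, hm.2]
          rw [← mem_homogeneousSubmodule]
          exact Submodule.smul_mem _ _
            ((mem_homogeneousSubmodule _ _).mpr (isHomogeneous_monomial _ hdeg))
    · rw [if_neg hc]
      exact ⟨Submodule.zero_mem _, isHomogeneous_zero _ _ _⟩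
  · -- differential
    funext T
    rw [Dmap_apply]
    show (∑ t ∈ (T.1ᶜ).attach, sgn kk T.1 t.1 •
        (X t.1 * (if s ∈ insert t.1 T.1 ∧ eTv (insert t.1 T.1) ≤ b then
          sgn kk ((insert t.1 T.1).erase s) s •
            monomial (b - eTv (insert t.1 T.1)) (lam ((insert t.1 T.1).erase s)) else 0)))
      = if eTv T.1 ≤ b then monomial (b - eTv T.1) (lam T.1) else 0
    by_cases hsT : s ∈ T.1
    · have hsU : s ∉ T.1.erase s := Finset.notMem_erase s T.1
      have hipos : 0 < i := by
        rw [← T.2]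
        exact Finset.card_pos.mpr ⟨s, hsT⟩
      have hUcard : (T.1.erase s).card + 1 = i := by
        rw [Finset.card_erase_of_mem hsT, T.2]
        omega
      have hTins : insert s (T.1.erase s) = T.1 := Finset.insert_erase hsT
      by_cases hTb : eTv T.1 ≤ b
      · have hterm : ∀ t ∈ (T.1ᶜ).attach, sgn kk T.1 t.1 •
            (X t.1 * (if s ∈ insert t.1 T.1 ∧ eTv (insert t.1 T.1) ≤ b then
              sgn kk ((insert t.1 T.1).erase s) s •
                monomial (b - eTv (insert t.1 T.1)) (lam ((insert t.1 T.1).erase s)) else 0))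
            = monomial (b - eTv T.1)
                (sgn kk T.1 t.1 * (sgn kk (insert t.1 (T.1.erase s)) s *
                  lam (insert t.1 (T.1.erase s)))) := by
          intro t _
          have htT : t.1 ∉ T.1 := Finset.mem_compl.mp t.2
          have hts : t.1 ≠ s := fun h => htT (h ▸ hsT)
          have herase : (insert t.1 T.1).erase s = insert t.1 (T.1.erase s) :=
            Finset.erase_insert_of_ne hts
          by_cases hb : eTv (insert t.1 T.1) ≤ b
          · rw [if_pos ⟨Finset.mem_insert_of_mem hsT, hb⟩, herase, mul_smul_comm, smul_smul,
              X_mul_monomial_step htT hb, smul_monomial, smul_eq_mul, mul_assoc]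
          · rw [if_neg (fun hcon => hb hcon.2), mul_zero, smul_zero]
            have htU : t.1 ∉ T.1.erase s := fun h => htT (Finset.mem_of_mem_erase h)
            have hlz : lam (insert t.1 (T.1.erase s)) = 0 := by
              refine hlam0 _ (fun hcon => hb ?_)
              rw [Finsupp.le_def]
              intro r
              have h1 := Finsupp.le_def.mp hTb r
              have h2 := Finsupp.le_def.mp hcon t.1
              rw [eTv_apply, if_pos (Finset.mem_insert_self _ _)] at h2
              rw [eTv_apply] at h1 ⊢
              by_cases hrt : r = t.1
              · subst hrt
                rw [if_pos (Finset.mem_insert_self _ _)]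
                omega
              · by_cases hrT : r ∈ T.1
                · rw [if_pos (Finset.mem_insert_of_mem hrT)]
                  rw [if_pos hrT] at h1
                  exact h1
                · rw [if_neg (fun hcon =>
                    (Finset.mem_insert.mp hcon).elim (fun h => hrt h) (fun h => hrT h))]
                  omega
            simp [hlz]
        rw [Finset.sum_congr rfl hterm, ← map_sum, if_pos hTb]
        congr 1
        rw [Finset.sum_attach (T.1ᶜ) (fun t => sgn kk T.1 t * (sgn kk (insert t (T.1.erase s)) s *
          lam (insert t (T.1.erase s))))]
        have hsign : ∀ t ∈ T.1ᶜ, sgn kk T.1 t * (sgn kk (insert t (T.1.erase s)) s *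
            lam (insert t (T.1.erase s)))
            = (-(sgn kk (T.1.erase s) s)) * (sgn kk (T.1.erase s) t * lam (insert t (T.1.erase s))) := by
          intro t ht
          have htT := Finset.mem_compl.mp ht
          have hts : s ≠ t := fun h => htT (h ▸ hsT)
          have htU : t ∉ T.1.erase s := fun h => htT (Finset.mem_of_mem_erase h)
          have hsw := sgn_swap (kk := kk) hts hsU htU
          have hsgnT : sgn kk T.1 t = sgn kk (insert s (T.1.erase s)) t := by rw [hTins]
          rw [hsgnT, ← mul_assoc, hsw]
          ring
        rw [Finset.sum_congr rfl hsign, ← Finset.mul_sum]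
        have hcu := hcyc (T.1.erase s) hUcard
        have hUc : (T.1.erase s)ᶜ = insert s (T.1ᶜ) := by
          ext r
          by_cases hr : r = s
          · subst hr
            simp [hsU, hsT]
          · simp [Finset.mem_erase, hr, Finset.mem_compl]
        rw [hUc, Finset.sum_insert (by simp [hsT] : s ∉ T.1ᶜ), hTins] at hcu
        have h2 : ∑ t ∈ T.1ᶜ, sgn kk (T.1.erase s) t * lam (insert t (T.1.erase s))
            = -(sgn kk (T.1.erase s) s * lam T.1) := by
          linear_combination hcu
        rw [h2]
        have h3 := sgn_mul_self (kk := kk) (T.1.erase s) s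
        linear_combination (lam T.1) * h3
      · rw [if_neg hTb]
        refine Finset.sum_eq_zero fun t _ => ?_
        rw [if_neg (fun hcon => hTb (le_trans (eTv_mono (Finset.subset_insert _ _)) hcon.2)),
          mul_zero, smul_zero]
    · have hsc : s ∈ T.1ᶜ := Finset.mem_compl.mpr hsT
      refine Eq.trans (Finset.sum_eq_single_of_mem ⟨s, hsc⟩ (Finset.mem_attach _ _)
        (fun t _ hne => ?_)) ?_
      · have hts : s ∉ insert t.1 T.1 := by
          rw [Finset.mem_insert]
          rintro (h | h)
          · exact hne (Subtype.ext h.symm)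
          · exact hsT h
        rw [if_neg (fun hcon => hts hcon.1), mul_zero, smul_zero]
      · have hes : (insert s T.1).erase s = T.1 := Finset.erase_insert hsT
        by_cases hb : eTv (insert s T.1) ≤ b
        · rw [if_pos ⟨Finset.mem_insert_self _ _, hb⟩, hes, mul_smul_comm, smul_smul,
            sgn_mul_self, X_mul_monomial_step hsT hb, one_smul,
            if_pos (le_trans (eTv_mono (Finset.subset_insert s T.1)) hb)]
        · rw [if_neg (fun hcon => hb hcon.2), mul_zero, smul_zero]
          by_cases hTb : eTv T.1 ≤ b
          · rw [if_pos hTb]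
            have hlT : lam T.1 = 0 := by
              by_contra hl
              exact hb (hsH T.1 T.2 hsT hTb (hmem T.1 T.2 hl).1).1
            rw [hlT, monomial_zero]
          · rw [if_neg hTb]

end RegAux

namespace RegAux

variable {kk : Type} [Field kk] {n : ℕ}

lemma vanishing {d : ℕ} (hn : n = d + 1) (A : Set (Fin n →₀ ℕ))
    (hA1 : ∀ a ∈ A, ∀ r, a r ≤ 1) (hA2 : ∀ a ∈ A, a.degree ≤ d)
    (i : ℕ) (j : ℤ) (hj : (d : ℤ) + i < j) :
    ¬ TorNonzero (Ideal.span ((fun a => monomial a (1 : kk)) '' A)) i j := by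
  classical
  unfold TorNonzero
  rw [not_not]
  intro z hz
  rw [Submodule.mem_inf] at hz
  obtain ⟨hz1, hz2⟩ := hz
  set J := Ideal.span ((fun a => monomial a (1 : kk)) '' A) with hJ
  obtain ⟨N, hNj⟩ : ∃ N : ℕ, (N : ℤ) = j - i := ⟨(j - (i : ℤ)).toNat, by omega⟩
  have hNt : (j - (i : ℤ)).toNat = N := by omega
  have hNd : d + 1 ≤ N := by omega
  have hstrand : ∀ T : {T : Finset (Fin n) // T.card = i}, ∀ c ∈ (z T).support,
      (∃ a ∈ A, a ≤ c) ∧ c.degree = N := by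
    intro T c hc
    have hp := Submodule.mem_pi.mp hz1 T (Set.mem_univ T)
    rw [gradedPiece, if_neg (by omega : ¬ j - (i : ℤ) < 0), Submodule.mem_inf] at hp
    constructor
    · have hpJ := hp.1
      rw [Submodule.restrictScalars_mem, hJ, mem_ideal_span_monomial_image] at hpJ
      exact hpJ c hc
    · have hph := (mem_homogeneousSubmodule _ _).mp hp.2
      have hco := hph (MvPolynomial.mem_support_iff.mp hc)
      rw [Finsupp.degree_eq_weight_one]
      rw [hNt] at hco
      exact hco
  set lam : (Fin n →₀ ℕ) → Finset (Fin n) → kk := fun b V =>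
    if h : V.card = i ∧ eTv V ≤ b then coeff (b - eTv V) (z ⟨V, h.1⟩) else 0 with hlam
  have hcycAll : ∀ (b : Fin n →₀ ℕ) (U : Finset (Fin n)), U.card + 1 = i →
      ∑ t ∈ Uᶜ, sgn kk U t * lam b (insert t U) = 0 := by
    intro b U hU
    by_cases hUb : eTv U ≤ b
    · obtain ⟨m, rfl⟩ : ∃ m, i = m + 1 := ⟨U.card, hU.symm⟩
      have hDz : Dmap kk n m z = 0 := LinearMap.mem_ker.mp hz2
      have h0 := congrFun hDz ⟨U, by omega⟩
      have h1 := congrArg (coeff (b - eTv U)) h0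
      rw [Dmap_apply] at h1
      rw [MvPolynomial.coeff_sum] at h1
      simp only [MvPolynomial.coeff_smul, smul_eq_mul] at h1
      have h1' : ∑ t ∈ (Uᶜ).attach, sgn kk U t.1 *
          coeff (b - eTv U) (X t.1 * z ⟨insert t.1 U, by
            rw [Finset.card_insert_of_notMem (Finset.mem_compl.mp t.2), hU]⟩) = 0 := by
        exact h1.trans (by simp)
      rw [← Finset.sum_attach (Uᶜ) (fun t => sgn kk U t * lam b (insert t U))]
      refine Eq.trans (Finset.sum_congr rfl fun t _ => ?_) h1'
      congr 1
      have htU : t.1 ∉ U := Finset.mem_compl.mp t.2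
      rw [MvPolynomial.coeff_X_mul']
      by_cases hbt : t.1 ∈ ((b - eTv U : Fin n →₀ ℕ)).support
      · rw [if_pos hbt]
        have hb3 : ((b - eTv U : Fin n →₀ ℕ)) t.1 ≠ 0 := Finsupp.mem_support_iff.mp hbt
        rw [Finsupp.tsub_apply, eTv_apply, if_neg htU, tsub_zero] at hb3
        have hble : eTv (insert t.1 U) ≤ b := by
          rw [Finsupp.le_def]
          intro r
          have h2 := Finsupp.le_def.mp hUb r
          rw [eTv_apply] at h2 ⊢
          by_cases hrt : r = t.1
          · subst hrt
            rw [if_pos (Finset.mem_insert_self _ _)]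
            omega
          · by_cases hrU : r ∈ U
            · rw [if_pos (Finset.mem_insert_of_mem hrU)]
              rw [if_pos hrU] at h2
              exact h2
            · rw [if_neg (fun hc => (Finset.mem_insert.mp hc).elim hrt hrU)]
              omega
        simp only [hlam]
        rw [dif_pos ⟨by rw [Finset.card_insert_of_notMem htU, hU], hble⟩]
        have hexp : b - eTv (insert t.1 U) = (b - eTv U) - Finsupp.single t.1 1 := by
          rw [eTv_insert htU, tsub_add_eq_tsub_tsub]
        rw [hexp]
      · rw [if_neg hbt]
        have hb0 : b t.1 = 0 := by
          have hb3 := Finsupp.notMem_support_iff.mp hbt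
          rw [Finsupp.tsub_apply, eTv_apply, if_neg htU, tsub_zero] at hb3
          exact hb3
        simp only [hlam]
        refine dif_neg fun hcon => ?_
        have h4 := Finsupp.le_def.mp hcon.2 t.1
        rw [eTv_apply, if_pos (Finset.mem_insert_self _ _)] at h4
        omega
    · refine Finset.sum_eq_zero fun t ht => ?_
      have : lam b (insert t U) = 0 := by
        simp only [hlam]
        exact dif_neg fun hcon => hUb (le_trans (eTv_mono (Finset.subset_insert t U)) hcon.2)
      rw [this, mul_zero]
  set zb : (Fin n →₀ ℕ) → KModule kk n i := fun b T =>
    if eTv T.1 ≤ b then monomial (b - eTv T.1) (lam b T.1) else 0 with hzb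
  set B : Finset (Fin n →₀ ℕ) := Finset.univ.biUnion
    (fun T : {T : Finset (Fin n) // T.card = i} =>
      (z T).support.image (fun c => c + eTv T.1)) with hB
  have hdecomp : z = ∑ b ∈ B, zb b := by
    funext T
    rw [Finset.sum_apply]
    have hsub : (z T).support.image (fun c => c + eTv T.1) ⊆ B := by
      intro b hb
      rw [hB]
      exact Finset.mem_biUnion.mpr ⟨T, Finset.mem_univ T, hb⟩
    rw [← Finset.sum_subset hsub (fun b _ hbnot => ?_)]
    · rw [Finset.sum_image (fun c _ c' _ h => add_right_cancel h)]
      have hterms : ∀ c ∈ (z T).support, zb (c + eTv T.1) T = monomial c (coeff c (z T)) := by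
        intro c hc
        rw [hzb]
        beta_reduce
        rw [if_pos (le_add_self : eTv T.1 ≤ c + eTv T.1)]
        have he : c + eTv T.1 - eTv T.1 = c := add_tsub_cancel_right c (eTv T.1)
        rw [he]
        congr 1
        simp only [hlam]
        rw [dif_pos ⟨T.2, (le_add_self : eTv T.1 ≤ c + eTv T.1)⟩, he,
          Subtype.coe_eta T T.2]
      rw [Finset.sum_congr rfl hterms, support_sum_monomial_coeff]
    · rw [hzb]
      beta_reduce
      by_cases hle : eTv T.1 ≤ b
      · rw [if_pos hle]
        have hco : coeff (b - eTv T.1) (z T) = 0 := by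
          by_contra hco
          exact hbnot (Finset.mem_image.mpr ⟨b - eTv T.1,
            MvPolynomial.mem_support_iff.mpr hco, tsub_add_cancel_of_le hle⟩)
        have hl : lam b T.1 = 0 := by
          simp only [hlam]
          rw [dif_pos ⟨T.2, hle⟩, Subtype.coe_eta T T.2]
          exact hco
        rw [hl, monomial_zero]
      · rw [if_neg hle]
  have hbW : ∀ b ∈ B, ∃ w : KModule kk n (i + 1),
      w ∈ koszulStrand J (i + 1) j ∧ Dmap kk n i w = zb b := by
    intro b hbB
    have hlam0 : ∀ V, ¬ eTv V ≤ b → lam b V = 0 := fun V h => by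
      simp only [hlam]; exact dif_neg fun hc => h hc.2
    have hmemb : ∀ V, V.card = i → lam b V ≠ 0 →
        (∃ a ∈ A, a ≤ b - eTv V) ∧ (b - eTv V).degree = N := by
      intro V hV hl
      simp only [hlam] at hl
      by_cases hle : eTv V ≤ b
      · rw [dif_pos ⟨hV, hle⟩] at hl
        exact hstrand ⟨V, hV⟩ _ (MvPolynomial.mem_support_iff.mpr hl)
      · exact absurd (dif_neg fun hc => hle hc.2) hl
    obtain ⟨T0, hT0B⟩ := Finset.mem_biUnion.mp hbB
    obtain ⟨c0, hc0, hbc0⟩ := Finset.mem_image.mp hT0B.2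
    have hc0p := hstrand T0 c0 hc0
    have hbdeg : b.degree = N + i := by
      rw [← hbc0, degree_add', hc0p.2, eTv_degree, T0.2]
    have hex : ∃ s : Fin n, ∀ T : Finset (Fin n), T.card = i → s ∉ T → eTv T ≤ b →
        (∃ a ∈ A, a ≤ b - eTv T) →
        eTv (insert s T) ≤ b ∧ ∃ a ∈ A, a ≤ b - eTv (insert s T) := by
      by_cases h2 : ∃ r, 2 ≤ b r
      · obtain ⟨s, hs2⟩ := h2
        refine ⟨s, fun T hTc hsT hTb hma => ?_⟩
        obtain ⟨a, haA, hab⟩ := hma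
        have hsTb : eTv (insert s T) ≤ b := by
          rw [Finsupp.le_def]
          intro r
          have h1 := Finsupp.le_def.mp hTb r
          rw [eTv_apply] at h1 ⊢
          by_cases hrs : r = s
          · subst hrs
            rw [if_pos (Finset.mem_insert_self _ _)]
            omega
          · by_cases hrT : r ∈ T
            · rw [if_pos (Finset.mem_insert_of_mem hrT)]
              rw [if_pos hrT] at h1
              exact h1
            · rw [if_neg (fun hc => (Finset.mem_insert.mp hc).elim hrs hrT)]
              omega
        refine ⟨hsTb, a, haA, ?_⟩
        rw [Finsupp.le_def]
        intro r
        have h1 := Finsupp.le_def.mp hab r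
        rw [Finsupp.tsub_apply, eTv_apply] at h1
        rw [Finsupp.tsub_apply, eTv_apply]
        have ha1 := hA1 a haA r
        by_cases hrs : r = s
        · subst hrs
          rw [if_pos (Finset.mem_insert_self _ _)]
          rw [if_neg hsT] at h1
          omega
        · by_cases hrT : r ∈ T
          · rw [if_pos (Finset.mem_insert_of_mem hrT)]
            rw [if_pos hrT] at h1
            exact h1
          · rw [if_neg (fun hc => (Finset.mem_insert.mp hc).elim hrs hrT)]
            rw [if_neg hrT] at h1
            exact h1
      · push_neg at h2
        have hdegb : b.degree ≤ n := by
          rw [deg_univ]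
          calc ∑ r ∈ Finset.univ, b r ≤ ∑ _r ∈ (Finset.univ : Finset (Fin n)), 1 :=
              Finset.sum_le_sum (fun r _ => Nat.lt_succ_iff.mp (h2 r))
            _ = n := by simp
        have hi0 : i = 0 := by omega
        have hT0e : eTv T0.1 = 0 := by
          have hc : T0.1.card = 0 := by rw [T0.2, hi0]
          rw [Finset.card_eq_zero.mp hc, eTv, Finset.sum_empty]
        have hbc : b = c0 := by rw [← hbc0, hT0e, add_zero]
        obtain ⟨a, haA, hab⟩ := hc0p.1
        rw [← hbc] at hab
        have hadeg : a.degree ≤ d := hA2 a haA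
        obtain ⟨s, hs⟩ : ∃ s, a s < b s := by
          by_contra hcon
          push_neg at hcon
          have : b.degree ≤ a.degree := by
            rw [deg_univ, deg_univ]
            exact Finset.sum_le_sum fun r _ => hcon r
          omega
        refine ⟨s, fun T hTc hsT hTb _ => ?_⟩
        have hTe : T = ∅ := Finset.card_eq_zero.mp (by rw [hTc, hi0])
        subst hTe
        have hb1 := hA1 a haA s
        constructor
        · rw [Finsupp.le_def]
          intro r
          rw [eTv_apply]
          by_cases hrs : r = s
          · subst hrs
            rw [if_pos (Finset.mem_insert_self _ _)]
            omega
          · rw [if_neg (fun hc => hrs ((Finset.mem_insert.mp hc).resolve_right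
              (Finset.notMem_empty r)))]
            omega
        · refine ⟨a, haA, ?_⟩
          rw [Finsupp.le_def]
          intro r
          rw [Finsupp.tsub_apply, eTv_apply]
          have h1 := Finsupp.le_def.mp hab r
          have ha1 := hA1 a haA r
          by_cases hrs : r = s
          · subst hrs
            rw [if_pos (Finset.mem_insert_self _ _)]
            omega
          · rw [if_neg (fun hc => hrs ((Finset.mem_insert.mp hc).resolve_right
              (Finset.notMem_empty r)))]
            omega
    obtain ⟨s, hsH⟩ := hex
    obtain ⟨w, hw1, hw2⟩ := contraction A i N b s (lam b) hlam0 hmemb hsH (hcycAll b)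
    refine ⟨w, ?_, ?_⟩
    · rw [koszulStrand]
      refine Submodule.mem_pi.mpr fun T' _ => ?_
      rw [gradedPiece, if_neg (by push_cast; omega : ¬ ((j - ((i + 1 : ℕ) : ℤ)) < 0)),
        Submodule.mem_inf]
      refine ⟨?_, ?_⟩
      · rw [Submodule.restrictScalars_mem]
        exact (hw1 T').1
      · rw [mem_homogeneousSubmodule]
        have hNt1 : (j - ((i + 1 : ℕ) : ℤ)).toNat = N - 1 := by push_cast; omega
        rw [hNt1]
        exact (hw1 T').2
    · exact hw2
  choose w hw1 hw2 using hbW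
  rw [hdecomp]
  refine Submodule.mem_map.mpr ⟨∑ bb ∈ B.attach, w bb.1 bb.2, ?_, ?_⟩
  · exact Submodule.sum_mem _ fun bb _ => hw1 bb.1 bb.2
  · rw [map_sum]
    rw [Finset.sum_congr rfl (fun bb _ => hw2 bb.1 bb.2)]
    exact Finset.sum_attach B zb

end RegAux


namespace RegAux

variable {kk : Type} [Field kk] {n : ℕ}

lemma sqMonomial_eq (T : Finset (Fin n)) : sqMonomial kk T = monomial (eTv T) (1 : kk) := by
  classical
  induction T using Finset.induction with
  | empty =>
    rw [sqMonomial, Finset.prod_empty, eTv, Finset.sum_empty, monomial_zero']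
    simp
  | @insert a s ha ih =>
    rw [sqMonomial, Finset.prod_insert ha]
    have hX : (X a : MvPolynomial (Fin n) kk) = monomial (Finsupp.single a 1) 1 := rfl
    rw [show (∏ i ∈ s, (X i : MvPolynomial (Fin n) kk)) = sqMonomial kk s from rfl, ih, hX,
      monomial_mul, one_mul, eTv_insert ha, add_comm]

end RegAux


/-- **Lemma 2.11.** Let `I` be a squarefree monomial ideal generated in degree `d` in
`S = k[x_1,…,x_{d+1}]` and `f` a non-zero squarefree monomial with `1 ≤ deg f ≤ d`.
Then `reg (I + (f)) ≤ d`. -/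
theorem reg_le_in_dplus1_vars (kk : Type) [Field kk] (d : ℕ)
    (I : Ideal (MvPolynomial (Fin (d + 1)) kk))
    (hgen : IsSqfreeMonomialIdealGenInDeg I d)
    (f : Finset (Fin (d + 1))) (hf1 : 1 ≤ f.card) (hfd : f.card ≤ d) :
    reg (I + Ideal.span {sqMonomial kk f}) ≤ (d : ℤ) := by
  classical
  obtain ⟨G, hG, hIG⟩ := hgen
  set A : Set (Fin (d + 1) →₀ ℕ) := RegAux.eTv '' (G ∪ {f}) with hA
  have hfun : (fun T : Finset (Fin (d + 1)) => monomial (RegAux.eTv T) (1 : kk))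
      = sqMonomial kk := funext fun T => (RegAux.sqMonomial_eq T).symm
  have hJ : I + Ideal.span {sqMonomial kk f}
      = Ideal.span ((fun a => monomial a (1 : kk)) '' A) := by
    rw [hIG, Submodule.add_eq_sup, ← Ideal.span_union]
    congr 1
    rw [hA, Set.image_image, hfun, Set.image_union, Set.image_singleton]
  have hA1 : ∀ a ∈ A, ∀ r, a r ≤ 1 := by
    rintro a ⟨T, _, rfl⟩ r
    rw [RegAux.eTv_apply]
    split_ifs <;> omega
  have hA2 : ∀ a ∈ A, a.degree ≤ d := by
    rintro a ⟨T, hTm, rfl⟩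
    rw [RegAux.eTv_degree]
    rcases hTm with hTG | hTf
    · exact le_of_eq (hG T hTG)
    · rw [Set.mem_singleton_iff.mp hTf]
      exact hfd
  rw [hJ]
  have hbound : ∀ r ∈ {r : ℤ | ∃ (i : ℕ) (j : ℤ),
      TorNonzero (Ideal.span ((fun a => monomial a (1 : kk)) '' A)) i j ∧ r = j - i},
      r ≤ (d : ℤ) := by
    rintro r ⟨i, j, hT, rfl⟩
    by_contra hgt
    push_neg at hgt
    exact RegAux.vanishing rfl A hA1 hA2 i j (by omega) hT
  show sSup _ ≤ (d : ℤ)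
  rcases Set.eq_empty_or_nonempty {r : ℤ | ∃ (i : ℕ) (j : ℤ),
      TorNonzero (Ideal.span ((fun a => monomial a (1 : kk)) '' A)) i j ∧ r = j - i} with he | hne
  · rw [he, Int.csSup_empty]
    exact_mod_cast Nat.zero_le d
  · exact csSup_le hne hbound
end

section
/- Any non-zero ideal generated by squarefree monomials of degree d in the polynomial ring k[x_1,...,x_{d+1}] in d+1 variables over a field k has a linear free resolution, i.e., its Castelnuovo–Mumford regularity equals d. -/
/- # Preliminary definitions

We work in the polynomial ring `S = k[x_1,…,x_n]`, realized as `MvPolynomial (Fin n) kk`.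

* Graded pieces of `Tor_i^S(M, k)` are realized via the (graded) Koszul complex
  `M ⊗ Λ•(S^n)`: the degree-`j` strand in homological degree `i` is the complex
  whose `i`-th term is the direct sum over `i`-subsets `T` of the variables of the
  degree `j - i` graded piece of `M`.  `TorNonzero` expresses nonvanishing of the
  homology of this strand, i.e. `Tor_i^S(M, k)_j ≠ 0`.
* `reg` is the Castelnuovo–Mumford regularity `max { j - i | Tor_i(M,k)_j ≠ 0 }`.
* `SatisfiesN I d p` says the minimal free resolution of `I` is linear for the first
  `p - 1` steps (with generators in degree `d`), i.e. `Tor_i(I,k)_j = 0` unless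
  `j = d + i`, for all `i < p`.  `SatisfiesN I d 2` is "linearly presented". -/

open MvPolynomial

section Aux
open MvPolynomial

variable {kk : Type} [Field kk] {n : ℕ}

/-- characteristic vector of a finset -/
noncomputable def chiF {n : ℕ} (T : Finset (Fin n)) : Fin n →₀ ℕ := ∑ t ∈ T, Finsupp.single t 1

lemma chiF_apply (T : Finset (Fin n)) (s : Fin n) : chiF T s = if s ∈ T then 1 else 0 := by
  classical
  rw [chiF, Finset.sum_apply']
  simp [Finsupp.single_apply]

lemma chiF_insert {T : Finset (Fin n)} {t : Fin n} (h : t ∉ T) :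
    chiF (insert t T) = Finsupp.single t 1 + chiF T := by
  rw [chiF, Finset.sum_insert h]; rfl

lemma chiF_erase {U : Finset (Fin n)} {v : Fin n} (h : v ∈ U) :
    chiF U = Finsupp.single v 1 + chiF (U.erase v) := by
  conv_lhs => rw [← Finset.insert_erase h]
  exact chiF_insert (Finset.notMem_erase v U)

/-- total degree of an exponent vector -/
def degT {n : ℕ} (a : Fin n →₀ ℕ) : ℕ := ∑ s, a s

lemma degT_add (a b : Fin n →₀ ℕ) : degT (a + b) = degT a + degT b := by
  simp [degT, Finsupp.add_apply, Finset.sum_add_distrib]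

lemma degT_single (v : Fin n) : degT (Finsupp.single v 1) = 1 := by
  classical
  simp [degT, Finsupp.single_apply]

lemma degT_chiF (T : Finset (Fin n)) : degT (chiF T) = T.card := by
  classical
  simp only [degT, chiF_apply, Finset.sum_ite_mem, Finset.univ_inter]
  simp

lemma degT_mono {a b : Fin n →₀ ℕ} (h : a ≤ b) : degT a ≤ degT b :=
  Finset.sum_le_sum fun s _ => h s

lemma weight_one_eq (a : Fin n →₀ ℕ) : Finsupp.weight (1 : Fin n → ℕ) a = degT a := by
  classical
  rw [Finsupp.weight_apply, Finsupp.sum, degT]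
  rw [Finset.sum_subset (Finset.subset_univ a.support) (by
    intro x _ hx
    simp [Finsupp.notMem_support_iff.mp hx])]
  simp

lemma isHomog_iff (p : MvPolynomial (Fin n) kk) (m : ℕ) :
    p.IsHomogeneous m ↔ ∀ μ, coeff μ p ≠ 0 → degT μ = m := by
  constructor
  · intro h μ hμ
    have := h hμ
    rwa [weight_one_eq] at this
  · intro h μ hμ
    rw [weight_one_eq]
    exact h μ hμ

end Aux


section Aux2
open MvPolynomial

variable {kk : Type} [Field kk] {n : ℕ}

/-- `μ` is divisible by a generator from `G` -/
def OkG (G : Set (Finset (Fin n))) (μ : Fin n →₀ ℕ) : Prop := ∃ T ∈ G, chiF T ≤ μ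

/-- the ideal of polynomials all of whose monomials are divisible by a generator -/
noncomputable def divIdeal (kk : Type) [Field kk] {n : ℕ} (G : Set (Finset (Fin n))) :
    Ideal (MvPolynomial (Fin n) kk) where
  carrier := {p | ∀ μ, coeff μ p ≠ 0 → OkG G μ}
  add_mem' := by
    intro a b ha hb μ h
    by_cases h1 : coeff μ a ≠ 0
    · exact ha μ h1
    · push_neg at h1
      refine hb μ ?_
      intro h2
      rw [coeff_add, h1, h2, add_zero] at h
      exact h rfl
  zero_mem' := by intro μ h; simp at h
  smul_mem' := by
    intro c p hp μ h
    rw [smul_eq_mul, coeff_mul] at h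
    obtain ⟨x, hx, hne⟩ := Finset.exists_ne_zero_of_sum_ne_zero h
    have h2 : coeff x.2 p ≠ 0 := fun h0 => hne (by rw [h0, mul_zero])
    obtain ⟨T, hT, hle⟩ := hp x.2 h2
    refine ⟨T, hT, hle.trans ?_⟩
    rw [← Finset.HasAntidiagonal.mem_antidiagonal.mp hx]
    exact le_add_self

lemma sqMonomial_eq (T : Finset (Fin n)) : sqMonomial kk T = monomial (chiF T) 1 := by
  classical
  induction T using Finset.induction_on with
  | empty => simp [sqMonomial, chiF]
  | @insert a s h ih =>
      rw [sqMonomial, Finset.prod_insert h, ← sqMonomial, ih, chiF_insert h, X,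
        monomial_mul, one_mul]

lemma mono_mem_span {G : Set (Finset (Fin n))} {T : Finset (Fin n)} (hT : T ∈ G)
    {b : Fin n →₀ ℕ} (hle : chiF T ≤ b) (c : kk) :
    monomial b c ∈ Ideal.span (sqMonomial kk '' G) := by
  have : (monomial b c : MvPolynomial (Fin n) kk) = monomial (b - chiF T) c * sqMonomial kk T := by
    rw [sqMonomial_eq, monomial_mul, mul_one, tsub_add_cancel_of_le hle]
  rw [this]
  exact Ideal.mul_mem_left _ _ (Ideal.subset_span ⟨T, hT, rfl⟩)

lemma mem_span_of_forall {G : Set (Finset (Fin n))} {p : MvPolynomial (Fin n) kk}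
    (h : ∀ μ, coeff μ p ≠ 0 → OkG G μ) : p ∈ Ideal.span (sqMonomial kk '' G) := by
  rw [← support_sum_monomial_coeff p]
  refine Submodule.sum_mem _ fun μ hμ => ?_
  obtain ⟨T, hT, hle⟩ := h μ (mem_support_iff.mp hμ)
  exact mono_mem_span hT hle _

lemma coeff_okG {G : Set (Finset (Fin n))} {p : MvPolynomial (Fin n) kk}
    (hp : p ∈ Ideal.span (sqMonomial kk '' G)) {μ : Fin n →₀ ℕ} (hμ : coeff μ p ≠ 0) :
    OkG G μ := by
  classical
  have hle : Ideal.span (sqMonomial kk '' G) ≤ divIdeal kk G := by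
    rw [Ideal.span_le]
    rintro _ ⟨T, hT, rfl⟩ ν hν
    rw [sqMonomial_eq, coeff_monomial] at hν
    by_cases he : chiF T = ν
    · exact ⟨T, hT, le_of_eq he⟩
    · rw [if_neg he] at hν; exact absurd rfl hν
  exact hle hp μ hμ

lemma gradedPiece_eq_bot {G : Set (Finset (Fin n))} {d : ℕ} (hG : ∀ T ∈ G, T.card = d)
    {m : ℤ} (hm : m < d) :
    gradedPiece (Ideal.span (sqMonomial kk '' G)) m = ⊥ := by
  rw [gradedPiece]
  by_cases h0 : m < 0
  · rw [if_pos h0]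
  · rw [if_neg h0]
    rw [eq_bot_iff]
    rintro p ⟨hpI, hph⟩
    rw [Submodule.mem_bot]
    by_contra hp0
    obtain ⟨μ, hμ⟩ := MvPolynomial.ne_zero_iff.mp hp0
    obtain ⟨T, hT, hle⟩ := coeff_okG hpI hμ
    have hd : degT μ = m.toNat := (isHomog_iff _ _).mp (mem_homogeneousSubmodule _ _ |>.mp hph) μ hμ
    have h1 : (d : ℕ) ≤ degT μ := by
      rw [← hG T hT, ← degT_chiF T]
      exact degT_mono hle
    omega

end Aux2


section Aux3
open MvPolynomial

/-- Koszul sign exponent -/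
def sgn {n : ℕ} (U : Finset (Fin n)) (t : Fin n) : ℕ := (U.filter (fun s => s < t)).card

lemma sgn_insert {n : ℕ} {U : Finset (Fin n)} {a : Fin n} (t : Fin n) (ha : a ∉ U) :
    sgn (insert a U) t = sgn U t + (if a < t then 1 else 0) := by
  classical
  rw [sgn, Finset.filter_insert]
  by_cases h : a < t
  · rw [if_pos h, if_pos h, Finset.card_insert_of_notMem (by simp [ha]), sgn]
  · rw [if_neg h, if_neg h, add_zero, sgn]

lemma negpow_mul_self {kk : Type} [Field kk] (k : ℕ) (x : kk) :
    (-1:kk)^k * ((-1)^k * x) = x := by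
  rw [← mul_assoc, ← pow_add]
  have : Even (k + k) := ⟨k, rfl⟩
  rw [this.neg_one_pow, one_mul]

lemma key_homotopy {kk : Type} [Field kk] {d : ℕ} {G : Set (Finset (Fin (d+1)))}
    (hG : ∀ T ∈ G, T.card = d) {T₀ : Finset (Fin (d+1))} (hT₀ : T₀ ∈ G)
    (i : ℕ) (e : ℕ) (he : d + 1 ≤ e)
    (f' : Finset (Fin (d+1)) → MvPolynomial (Fin (d+1)) kk)
    (Hc : ∀ U μ, coeff μ (f' U) ≠ 0 → OkG G μ ∧ degT μ = e)
    (cyc : ∀ R : Finset (Fin (d+1)), R.card + 1 = i →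
      ∑ t ∈ Rᶜ, ((-1:kk)^(sgn R t)) • (X t * f' (insert t R)) = 0) :
    ∃ g' : Finset (Fin (d+1)) → MvPolynomial (Fin (d+1)) kk,
      (∀ U μ', coeff μ' (g' U) ≠ 0 → OkG G μ' ∧ degT μ' = e - 1) ∧
      (∀ U, U.card = i → ∑ t ∈ Uᶜ, ((-1:kk)^(sgn U t)) • (X t * g' (insert t U)) = f' U) := by
  classical
  -- a vertex not in T₀
  have hT₀c : T₀ᶜ.Nonempty := by
    rw [← Finset.card_pos, Finset.card_compl, hG T₀ hT₀]
    simp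
  obtain ⟨v₀, hv₀⟩ := hT₀c
  have hv₀' : v₀ ∉ T₀ := Finset.mem_compl.mp hv₀
  set apex : (Fin (d+1) →₀ ℕ) → Fin (d+1) :=
    fun b => if h : ∃ v, 2 ≤ b v then h.choose else v₀ with hapex
  -- main apex property
  have LA : ∀ (U : Finset (Fin (d+1))) (ν : Fin (d+1) →₀ ℕ), apex (ν + chiF U) ∉ U →
      OkG G ν → degT ν = e →
      1 ≤ ν (apex (ν + chiF U)) ∧ OkG G (ν - Finsupp.single (apex (ν + chiF U)) 1) := by
    intro U ν hvU hok hdeg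
    obtain ⟨T₁, hT₁, hle₁⟩ := hok
    by_cases h : ∃ w, 2 ≤ (ν + chiF U) w
    · have hv2 : 2 ≤ (ν + chiF U) (apex (ν + chiF U)) := by
        rw [hapex]
        simp only [dif_pos h]
        exact h.choose_spec
      set v := apex (ν + chiF U) with hvdef
      have hcU : chiF U v = 0 := by rw [chiF_apply, if_neg hvU]
      have hνv : 2 ≤ ν v := by rwa [Finsupp.add_apply, hcU, add_zero] at hv2
      refine ⟨by omega, T₁, hT₁, fun s => ?_⟩
      rw [Finsupp.tsub_apply, Finsupp.single_apply]
      have hcle : chiF T₁ s ≤ ν s := hle₁ s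
      have hc1 : chiF T₁ s ≤ 1 := by rw [chiF_apply]; split <;> omega
      by_cases hs : v = s
      · subst hs
        rw [if_pos rfl]
        omega
      · rw [if_neg hs]; omega
    · have hv : apex (ν + chiF U) = v₀ := by rw [hapex]; exact dif_neg h
      push_neg at h
      have hν1 : ∀ w, ν w ≤ 1 := by
        intro w
        have h1 : ν w ≤ (ν + chiF U) w := by simp
        have h2 := h w
        omega
      have hall : ∀ w, ν w = 1 := by
        intro w
        by_contra hw
        have hw0 : ν w = 0 := by have := hν1 w; omega
        have hle : degT ν ≤ d := by
          have h1 : degT ν = ∑ s ∈ Finset.univ.erase w, ν s := by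
            rw [degT, ← Finset.add_sum_erase _ _ (Finset.mem_univ w), hw0, zero_add]
          rw [h1]
          calc ∑ s ∈ Finset.univ.erase w, ν s ≤ ∑ _s ∈ Finset.univ.erase w, 1 :=
              Finset.sum_le_sum (fun s _ => hν1 s)
            _ = d := by
              rw [Finset.sum_const, Finset.card_erase_of_mem (Finset.mem_univ w)]
              simp
        omega
      rw [hv]
      refine ⟨by rw [hall v₀], T₀, hT₀, fun s => ?_⟩
      rw [Finsupp.tsub_apply, Finsupp.single_apply, chiF_apply, hall s]
      by_cases hs : v₀ = s
      · rw [if_pos hs, if_neg (fun hm => hv₀' (hs ▸ hm))]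
      · rw [if_neg hs]
        split <;> omega
  -- coefficient formula for the cone-contraction building block
  have Hinner : ∀ (p : MvPolynomial (Fin (d+1)) kk) (W : Finset (Fin (d+1))) (v : Fin (d+1))
      (μ' : Fin (d+1) →₀ ℕ),
      coeff μ' (∑ ν ∈ p.support, if (1 ≤ ν v ∧ apex (ν + chiF W) = v)
        then monomial (ν - Finsupp.single v 1) (coeff ν p) else 0) =
      (if apex (μ' + Finsupp.single v 1 + chiF W) = v
        then coeff (μ' + Finsupp.single v 1) p else 0) := by
    intro p W v μ'
    rw [coeff_sum]
    have hterm : ∀ ν ∈ p.support,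
        coeff μ' (if (1 ≤ ν v ∧ apex (ν + chiF W) = v)
          then monomial (ν - Finsupp.single v 1) (coeff ν p) else 0)
        = if ν = μ' + Finsupp.single v 1 then
            (if apex (μ' + Finsupp.single v 1 + chiF W) = v
              then coeff (μ' + Finsupp.single v 1) p else 0) else 0 := by
      intro ν _
      by_cases hν : ν = μ' + Finsupp.single v 1
      · subst hν
        have h1 : 1 ≤ (μ' + Finsupp.single v 1 : Fin (d+1) →₀ ℕ) v := by
          rw [Finsupp.add_apply, Finsupp.single_apply, if_pos rfl]; omega
        have h2 : (μ' + Finsupp.single v 1) - Finsupp.single v 1 = μ' :=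
          add_tsub_cancel_right _ _
        rw [if_pos rfl]
        by_cases h3 : apex (μ' + Finsupp.single v 1 + chiF W) = v
        · rw [if_pos h3, if_pos ⟨h1, h3⟩, h2, coeff_monomial, if_pos rfl]
        · rw [if_neg h3, if_neg (fun hc => h3 hc.2), coeff_zero]
      · rw [if_neg hν]
        split_ifs with hg
        · rw [coeff_monomial, if_neg ?_]
          intro hc
          exact hν (by rw [← hc, tsub_add_cancel_of_le (Finsupp.single_le_iff.mpr hg.1)])
        · exact coeff_zero _
    rw [Finset.sum_congr rfl hterm, Finset.sum_ite_eq' _ (μ' + Finsupp.single v 1)]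
    by_cases hm : μ' + Finsupp.single v 1 ∈ p.support
    · rw [if_pos hm]
    · rw [if_neg hm, notMem_support_iff.mp hm]
      split <;> rfl
  -- coefficient formula for g'
  have HG : ∀ (U : Finset (Fin (d+1))) (μ' : Fin (d+1) →₀ ℕ),
      coeff μ' (∑ v ∈ U, ((-1:kk) ^ (sgn (U.erase v) v)) •
        (∑ ν ∈ (f' (U.erase v)).support, if (1 ≤ ν v ∧ apex (ν + chiF (U.erase v)) = v)
          then monomial (ν - Finsupp.single v 1) (coeff ν (f' (U.erase v))) else 0)) =
      if apex (μ' + chiF U) ∈ U then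
        ((-1:kk) ^ (sgn (U.erase (apex (μ' + chiF U))) (apex (μ' + chiF U)))) *
          coeff (μ' + Finsupp.single (apex (μ' + chiF U)) 1)
            (f' (U.erase (apex (μ' + chiF U)))) else 0 := by
    intro U μ'
    rw [coeff_sum]
    have hterm : ∀ v ∈ U,
        coeff μ' (((-1:kk) ^ (sgn (U.erase v) v)) •
          (∑ ν ∈ (f' (U.erase v)).support, if (1 ≤ ν v ∧ apex (ν + chiF (U.erase v)) = v)
            then monomial (ν - Finsupp.single v 1) (coeff ν (f' (U.erase v))) else 0))
        = if apex (μ' + chiF U) = v then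
            ((-1:kk) ^ (sgn (U.erase v) v)) *
              coeff (μ' + Finsupp.single v 1) (f' (U.erase v)) else 0 := by
      intro v hv
      rw [coeff_smul, smul_eq_mul, Hinner (f' (U.erase v)) (U.erase v) v μ']
      have harg : μ' + Finsupp.single v 1 + chiF (U.erase v) = μ' + chiF U := by
        rw [add_assoc, ← chiF_erase hv]
      rw [harg]
      split_ifs with hx
      · rfl
      · exact mul_zero _
    rw [Finset.sum_congr rfl hterm, Finset.sum_ite_eq _ (apex (μ' + chiF U))]
  -- the homotopy
  refine ⟨fun U => ∑ v ∈ U, ((-1:kk) ^ (sgn (U.erase v) v)) •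
      (∑ ν ∈ (f' (U.erase v)).support, if (1 ≤ ν v ∧ apex (ν + chiF (U.erase v)) = v)
        then monomial (ν - Finsupp.single v 1) (coeff ν (f' (U.erase v))) else 0), ?_, ?_⟩
  · -- coefficient criterion for g'
    intro U μ' hne
    rw [HG U μ'] at hne
    by_cases happ : apex (μ' + chiF U) ∈ U
    · rw [if_pos happ] at hne
      set v := apex (μ' + chiF U) with hvdef
      have hco : coeff (μ' + Finsupp.single v 1) (f' (U.erase v)) ≠ 0 := by
        intro h0
        rw [h0, mul_zero] at hne
        exact hne rfl
      obtain ⟨hok, hdeg⟩ := Hc _ _ hco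
      have harg : μ' + Finsupp.single v 1 + chiF (U.erase v) = μ' + chiF U := by
        rw [add_assoc, ← chiF_erase happ]
      have hnotin : apex ((μ' + Finsupp.single v 1) + chiF (U.erase v)) ∉ U.erase v := by
        rw [harg, ← hvdef]
        exact Finset.notMem_erase _ _
      have hLA := (LA (U.erase v) (μ' + Finsupp.single v 1) hnotin hok hdeg).2
      rw [harg, ← hvdef, add_tsub_cancel_right] at hLA
      constructor
      · exact hLA
      · rw [degT_add, degT_single] at hdeg
        omega
    · rw [if_neg happ] at hne
      exact absurd rfl hne
  · -- the boundary identity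
    intro U hU
    apply MvPolynomial.ext
    intro μ
    rw [coeff_sum]
    have hterm : ∀ t ∈ Uᶜ,
        coeff μ (((-1:kk)^(sgn U t)) • (X t * ∑ v ∈ (insert t U), ((-1:kk) ^ (sgn ((insert t U).erase v) v)) •
          (∑ ν ∈ (f' ((insert t U).erase v)).support, if (1 ≤ ν v ∧ apex (ν + chiF ((insert t U).erase v)) = v)
            then monomial (ν - Finsupp.single v 1) (coeff ν (f' ((insert t U).erase v))) else 0)))
        = if t ∈ μ.support then ((-1:kk)^(sgn U t)) *
            (if apex (μ + chiF U) ∈ insert t U then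
              ((-1:kk)^(sgn ((insert t U).erase (apex (μ + chiF U))) (apex (μ + chiF U)))) *
                coeff ((μ - Finsupp.single t 1) + Finsupp.single (apex (μ + chiF U)) 1)
                  (f' ((insert t U).erase (apex (μ + chiF U)))) else 0) else 0 := by
      intro t ht
      have htU : t ∉ U := Finset.mem_compl.mp ht
      rw [coeff_smul, smul_eq_mul, mul_comm (X t) _, coeff_mul_X']
      by_cases hts : t ∈ μ.support
      · rw [if_pos hts, if_pos hts, HG (insert t U) (μ - Finsupp.single t 1)]
        have h1t : Finsupp.single t 1 ≤ μ := Finsupp.single_le_iff.mpr (by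
          have := Finsupp.mem_support_iff.mp hts
          omega)
        have harg : (μ - Finsupp.single t 1) + chiF (insert t U) = μ + chiF U := by
          rw [chiF_insert htU, ← add_assoc, tsub_add_cancel_of_le h1t]
        rw [harg]
      · rw [if_neg hts, if_neg hts, mul_zero]
    rw [Finset.sum_congr rfl hterm]
    set v := apex (μ + chiF U) with hvdef
    by_cases hvU : v ∈ U
    · -- Case B : cone vertex already in U; use the cycle condition
      have hione : 1 ≤ i := hU ▸ Finset.card_pos.mpr ⟨v, hvU⟩
      have hv₀U : v ∉ U.erase v := Finset.notMem_erase _ _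
      have hcard₀ : (U.erase v).card + 1 = i := by
        rw [Finset.card_erase_of_mem hvU, hU]
        omega
      have hins : insert v (U.erase v) = U := Finset.insert_erase hvU
      have hcyc2 := congrArg (coeff (μ + Finsupp.single v 1)) (cyc (U.erase v) hcard₀)
      rw [coeff_sum, coeff_zero] at hcyc2
      have hterm2 : ∀ t ∈ (U.erase v)ᶜ,
          coeff (μ + Finsupp.single v 1) (((-1:kk)^(sgn (U.erase v) t)) • (X t * f' (insert t (U.erase v))))
          = ((-1:kk)^(sgn (U.erase v) t)) * (if t ∈ (μ + Finsupp.single v 1).support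
              then coeff ((μ + Finsupp.single v 1) - Finsupp.single t 1) (f' (insert t (U.erase v))) else 0) := by
        intro t _
        rw [coeff_smul, smul_eq_mul, mul_comm (X t) _, coeff_mul_X']
      rw [Finset.sum_congr rfl hterm2] at hcyc2
      have hcompl : (U.erase v)ᶜ = insert v Uᶜ := by
        ext s
        simp only [Finset.mem_compl, Finset.mem_erase, Finset.mem_insert, not_and]
        by_cases hsv : s = v <;> simp [hsv]
      rw [hcompl, Finset.sum_insert (by simp [Finset.mem_compl, hvU])] at hcyc2
      have hκv : v ∈ (μ + Finsupp.single v 1).support := by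
        rw [Finsupp.mem_support_iff, Finsupp.add_apply, Finsupp.single_apply, if_pos rfl]
        omega
      rw [if_pos hκv, add_tsub_cancel_right, hins] at hcyc2
      -- now rewrite the goal sum termwise
      have hterm3 : ∀ t ∈ Uᶜ,
          (if t ∈ μ.support then ((-1:kk)^(sgn U t)) *
            (if v ∈ insert t U then
              ((-1:kk)^(sgn ((insert t U).erase v) v)) *
                coeff ((μ - Finsupp.single t 1) + Finsupp.single v 1)
                  (f' ((insert t U).erase v)) else 0) else 0)
          = -(((-1:kk)^(sgn (U.erase v) v)) * (((-1:kk)^(sgn (U.erase v) t)) *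
              (if t ∈ (μ + Finsupp.single v 1).support
                then coeff ((μ + Finsupp.single v 1) - Finsupp.single t 1) (f' (insert t (U.erase v))) else 0))) := by
        intro t ht
        have htU : t ∉ U := Finset.mem_compl.mp ht
        have htv : t ≠ v := fun h => htU (h ▸ hvU)
        have h1 : v ∈ insert t U := Finset.mem_insert_of_mem hvU
        have h2 : (insert t U).erase v = insert t (U.erase v) := Finset.erase_insert_of_ne htv
        have h3 : t ∈ μ.support ↔ t ∈ (μ + Finsupp.single v 1).support := by
          rw [Finsupp.mem_support_iff, Finsupp.mem_support_iff, Finsupp.add_apply,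
            Finsupp.single_apply, if_neg (fun h => htv h.symm), add_zero]
        have h4 : (μ - Finsupp.single t 1) + Finsupp.single v 1
            = (μ + Finsupp.single v 1) - Finsupp.single t 1 := by
          ext s
          simp only [Finsupp.add_apply, Finsupp.tsub_apply, Finsupp.single_apply]
          by_cases hst : t = s
          · subst hst
            rw [if_pos rfl, if_neg (fun hvs : v = t => htv hvs.symm)]
            omega
          · rw [if_neg hst]
            by_cases hvs : v = s
            · rw [if_pos hvs]
              omega
            · rw [if_neg hvs]
              omega
        have h5 : sgn U t = sgn (U.erase v) t + (if v < t then 1 else 0) := by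
          conv_lhs => rw [← hins]
          exact sgn_insert t hv₀U
        have h6 : sgn (insert t (U.erase v)) v = sgn (U.erase v) v + (if t < v then 1 else 0) :=
          sgn_insert v (fun hc => htU (Finset.mem_of_mem_erase hc))
        by_cases hts : t ∈ μ.support
        · rw [if_pos hts, if_pos (h3.mp hts), if_pos h1, h2, h4, h6, h5]
          have hlt : (if v < t then 1 else 0) + (if t < v then 1 else 0) = 1 := by
            rcases lt_or_gt_of_ne htv with hx|hx
            · rw [if_neg (asymm hx), if_pos hx]
            · rw [if_pos hx, if_neg (asymm hx)]
          rw [← mul_assoc, ← pow_add, add_add_add_comm, hlt, pow_succ, pow_add]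
          ring
        · rw [if_neg hts, if_neg ((not_congr h3).mp hts)]
          simp
      rw [Finset.sum_congr rfl hterm3]
      have hsum : ∑ t ∈ Uᶜ, (((-1:kk)^(sgn (U.erase v) t)) *
          (if t ∈ (μ + Finsupp.single v 1).support
            then coeff ((μ + Finsupp.single v 1) - Finsupp.single t 1) (f' (insert t (U.erase v))) else 0))
          = -(((-1:kk)^(sgn (U.erase v) v)) * coeff μ (f' U)) := by
        linear_combination hcyc2
      rw [Finset.sum_neg_distrib, ← Finset.mul_sum, hsum, mul_neg, neg_neg]
      exact negpow_mul_self _ _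
    · -- Case A : cone vertex not in U; only t = v contributes
      have hsimp : ∀ t ∈ Uᶜ,
          (if t ∈ μ.support then ((-1:kk)^(sgn U t)) *
            (if v ∈ insert t U then
              ((-1:kk)^(sgn ((insert t U).erase v) v)) *
                coeff ((μ - Finsupp.single t 1) + Finsupp.single v 1)
                  (f' ((insert t U).erase v)) else 0) else 0)
          = if t = v then (if t ∈ μ.support then ((-1:kk)^(sgn U t)) *
              (((-1:kk)^(sgn ((insert t U).erase v) v)) *
                coeff ((μ - Finsupp.single t 1) + Finsupp.single v 1)
                  (f' ((insert t U).erase v))) else 0) else 0 := by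
        intro t _
        by_cases hteq : t = v
        · subst hteq
          rw [if_pos rfl, if_pos (Finset.mem_insert_self v U)]
        · have hvnotin : v ∉ insert t U := by
            intro hc
            rcases Finset.mem_insert.mp hc with hx|hx
            exacts [hteq hx.symm, hvU hx]
          rw [if_neg hteq, if_neg hvnotin]
          split_ifs <;> simp
      rw [Finset.sum_congr rfl hsimp, Finset.sum_ite_eq' _ v]
      rw [if_pos (Finset.mem_compl.mpr hvU), Finset.erase_insert hvU]
      by_cases hsup : v ∈ μ.support
      · rw [if_pos hsup, tsub_add_cancel_of_le (Finsupp.single_le_iff.mpr (by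
          have := Finsupp.mem_support_iff.mp hsup
          omega))]
        exact negpow_mul_self _ _
      · rw [if_neg hsup]
        by_cases hc0 : coeff μ (f' U) = 0
        · rw [hc0]
        · obtain ⟨hok, hdeg⟩ := Hc U μ hc0
          have h1 := (LA U μ (by rw [← hvdef]; exact hvU) hok hdeg).1
          rw [← hvdef] at h1
          have h0 : μ v = 0 := Finsupp.notMem_support_iff.mp hsup
          exact absurd h1 (by omega)
  
end Aux3


section Aux4
open MvPolynomial

lemma not_tor_of_gt {kk : Type} [Field kk] {d : ℕ} {G : Set (Finset (Fin (d+1)))}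
    (hG : ∀ T ∈ G, T.card = d) {T₀ : Finset (Fin (d+1))} (hT₀ : T₀ ∈ G)
    (i : ℕ) (j : ℤ) (hj : (d:ℤ) + i < j) :
    ¬ TorNonzero (Ideal.span (sqMonomial kk '' G)) i j := by
  classical
  rw [TorNonzero, not_not]
  intro f hf
  obtain ⟨hfs, hfk⟩ := Submodule.mem_inf.mp hf
  set I := Ideal.span (sqMonomial kk '' G) with hI
  have hfs' : ∀ T : {T : Finset (Fin (d+1)) // T.card = i}, f T ∈ gradedPiece I (j - i) := by
    intro T
    exact Submodule.mem_pi.mp hfs T (Set.mem_univ T)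
  set e := (j - (i:ℤ)).toNat with hedef
  have he : (e : ℤ) = j - i := Int.toNat_of_nonneg (by omega)
  have hed : d + 1 ≤ e := by omega
  set f' : Finset (Fin (d+1)) → MvPolynomial (Fin (d+1)) kk :=
    fun U => if h : U.card = i then f ⟨U, h⟩ else 0 with hf'
  have Hc : ∀ U μ, coeff μ (f' U) ≠ 0 → OkG G μ ∧ degT μ = e := by
    intro U μ hne
    simp only [hf'] at hne
    by_cases hcard : U.card = i
    · rw [dif_pos hcard] at hne
      have hmem := hfs' ⟨U, hcard⟩
      rw [gradedPiece, if_neg (by omega)] at hmem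
      obtain ⟨hmi, hmh⟩ := Submodule.mem_inf.mp hmem
      refine ⟨coeff_okG hmi hne, ?_⟩
      have := (isHomog_iff _ _).mp ((mem_homogeneousSubmodule _ _).mp hmh) μ hne
      rwa [← hedef] at this
    · rw [dif_neg hcard, coeff_zero] at hne
      exact absurd rfl hne
  have cyc : ∀ R : Finset (Fin (d+1)), R.card + 1 = i →
      ∑ t ∈ Rᶜ, ((-1:kk)^(sgn R t)) • (X t * f' (insert t R)) = 0 := by
    intro R hR
    subst hR
    simp only [Dout] at hfk
    have h0 := congrFun (LinearMap.mem_ker.mp hfk) ⟨R, rfl⟩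
    simp only [Dmap, LinearMap.coe_mk, AddHom.coe_mk, Pi.zero_apply] at h0
    rw [← h0, ← Finset.sum_attach Rᶜ
      (fun t => ((-1:kk)^(sgn R t)) • (X t * f' (insert t R)))]
    refine Finset.sum_congr rfl fun t _ => ?_
    have hcard : (insert t.1 R).card = R.card + 1 :=
      Finset.card_insert_of_notMem (Finset.mem_compl.mp t.2)
    simp only [hf']
    rw [dif_pos hcard]
    rfl
  obtain ⟨g', hg1, hg2⟩ := key_homotopy hG hT₀ i e hed f' Hc cyc
  rw [Submodule.mem_map]
  refine ⟨fun T' => g' T'.1, ?_, ?_⟩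
  · rw [koszulStrand]
    rw [Submodule.mem_pi]
    intro T' _
    have hjj : j - ((i:ℕ)+1:ℕ) = ((e-1 : ℕ) : ℤ) := by push_cast; omega
    rw [gradedPiece, if_neg (by omega), Submodule.mem_inf]
    constructor
    · exact mem_span_of_forall (fun μ hne => (hg1 T'.1 μ hne).1)
    · rw [mem_homogeneousSubmodule, isHomog_iff]
      intro μ hne
      have := (hg1 T'.1 μ hne).2
      rw [this]
      omega
  · funext T
    simp only [Dmap, LinearMap.coe_mk, AddHom.coe_mk]
    have h2 := hg2 T.1 T.2
    rw [← Finset.sum_attach T.1ᶜ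
      (fun t => ((-1:kk)^(sgn T.1 t)) • (X t * g' (insert t T.1)))] at h2
    simp only [hf'] at h2
    rw [dif_pos T.2] at h2
    exact h2

lemma not_tor_of_lt {kk : Type} [Field kk] {d : ℕ} {G : Set (Finset (Fin (d+1)))}
    (hG : ∀ T ∈ G, T.card = d) (i : ℕ) (j : ℤ) (hj : j < (d:ℤ) + i) :
    ¬ TorNonzero (Ideal.span (sqMonomial kk '' G)) i j := by
  rw [TorNonzero, not_not]
  intro f hf
  obtain ⟨hfs, _⟩ := Submodule.mem_inf.mp hf
  have hf0 : f = 0 := by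
    funext T
    have := Submodule.mem_pi.mp hfs T (Set.mem_univ T)
    rw [gradedPiece_eq_bot hG (by omega : j - (i:ℤ) < d), Submodule.mem_bot] at this
    exact this
  rw [hf0]
  exact Submodule.zero_mem _

lemma tor_at_zero_d {kk : Type} [Field kk] {d : ℕ} {G : Set (Finset (Fin (d+1)))}
    (hG : ∀ T ∈ G, T.card = d) {T₀ : Finset (Fin (d+1))} (hT₀ : T₀ ∈ G) :
    TorNonzero (Ideal.span (sqMonomial kk '' G)) 0 (d : ℤ) := by
  classical
  rw [TorNonzero]
  intro hle
  set I := Ideal.span (sqMonomial kk '' G) with hI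
  set f₀ : KModule kk (d+1) 0 := fun _ => sqMonomial kk T₀ with hf₀
  have hmem : f₀ ∈ koszulStrand I 0 (d:ℤ) ⊓ LinearMap.ker (Dout kk (d+1) 0) := by
    rw [Submodule.mem_inf]
    constructor
    · rw [koszulStrand, Submodule.mem_pi]
      intro T _
      rw [gradedPiece, if_neg (by omega), Submodule.mem_inf]
      constructor
      · exact Ideal.subset_span ⟨T₀, hT₀, rfl⟩
      · rw [mem_homogeneousSubmodule, isHomog_iff]
        intro μ hne
        rw [hf₀, sqMonomial_eq, coeff_monomial] at hne
        by_cases hc : chiF T₀ = μ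
        · rw [← hc, degT_chiF, hG T₀ hT₀]
          omega
        · rw [if_neg hc] at hne
          exact absurd rfl hne
    · rw [LinearMap.mem_ker]
      rfl
  have := hle hmem
  rw [Submodule.mem_map] at this
  obtain ⟨g, hg, hEq⟩ := this
  have hg0 : g = 0 := by
    funext T'
    have := Submodule.mem_pi.mp hg T' (Set.mem_univ T')
    have hbot : gradedPiece I ((d:ℤ) - ((0 + 1 : ℕ) : ℤ)) = ⊥ :=
      gradedPiece_eq_bot hG (by push_cast; omega)
    rw [hbot] at this
    exact Submodule.mem_bot _ |>.mp this
  rw [hg0, map_zero] at hEq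
  have h1 : (0 : MvPolynomial (Fin (d+1)) kk) = sqMonomial kk T₀ :=
    congrFun hEq ⟨∅, Finset.card_empty⟩
  have h2 : coeff (chiF T₀) (sqMonomial kk T₀) = 0 := by rw [← h1]; exact coeff_zero _
  rw [sqMonomial_eq, coeff_monomial, if_pos rfl] at h2
  exact one_ne_zero h2

end Aux4


/-- **Corollary 2.12.** Any non-zero ideal generated by squarefree monomials of degree `d`
in `k[x_1,…,x_{d+1}]` has a linear free resolution, i.e. its regularity equals `d`. -/
theorem linear_resolution_in_dplus1_vars (kk : Type) [Field kk] (d : ℕ)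
    (I : Ideal (MvPolynomial (Fin (d + 1)) kk)) (hI : I ≠ ⊥)
    (hgen : IsSqfreeMonomialIdealGenInDeg I d) :
    reg I = (d : ℤ) := by
  obtain ⟨G, hG, hspan⟩ := hgen
  subst hspan
  have hGne : G.Nonempty := by
    rcases Set.eq_empty_or_nonempty G with h|h
    · subst h
      simp [Set.image_empty, Ideal.span_empty] at hI
    · exact h
  obtain ⟨T₀, hT₀⟩ := hGne
  rw [reg]
  have hset : { r : ℤ | ∃ (i : ℕ) (j : ℤ),
      TorNonzero (Ideal.span (sqMonomial kk '' G)) i j ∧ r = j - i } = {(d:ℤ)} := by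
    ext r
    simp only [Set.mem_setOf_eq, Set.mem_singleton_iff]
    constructor
    · rintro ⟨i, j, htor, rfl⟩
      by_cases h1 : (d:ℤ) + i < j
      · exact absurd htor (not_tor_of_gt hG hT₀ i j h1)
      · by_cases h2 : j < (d:ℤ) + i
        · exact absurd htor (not_tor_of_lt hG i j h2)
        · omega
    · rintro rfl
      exact ⟨0, (d:ℤ), tor_at_zero_d hG hT₀, by simp⟩
  rw [hset]
  exact csSup_singleton _
end
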